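/- arXiv:1402.3125 — 6 statements merged into one kernel-verified Lean document; each statement's English description precedes it below -/
import Mathlib

section
/- Let X be a random variable with finite range, let L_1,…,L_n be {0,1}-valued random variables, and let T=(T_1,…,T_m) be a finite sequence of finite-valued messages with a speaker assignment j:{1,…,m}→{1,…,n}, such that for each round k, conditioned on (T_1,…,T_{k−1}) = t^{k−1} and L_{j(k)}=0, the message T_k is independent of X. Let 0 < b ≤ c < 1 and assume: (i) Pr(L_i=1 | X=x) = b for every player i and every x with Pr(X=x) > 0, and (ii) Pr(L_i=1 | T=t, X=x) ≤ c for every player i and every (t,x) with Pr(T=t, X=x) > 0. Then I(X;T) ≤ n·(−b·log(1−c) + c·log(1−b))/c. -/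
open Finset

/-- Probability of an event `E` under the probability mass function `p`
on a finite sample space `Ω`. -/
noncomputable def Pr {Ω : Type*} [Fintype Ω] (p : Ω → ℝ) (E : Set Ω) : ℝ :=
  ∑ ω, E.indicator p ω

/-- Conditional probability `Pr(E | F)`. -/
noncomputable def cPr {Ω : Type*} [Fintype Ω] (p : Ω → ℝ) (E F : Set Ω) : ℝ :=
  Pr p (E ∩ F) / Pr p F

/-- The suspicion given a random variable `Yv`:
`susp(Y) = Σ_y Pr(Y=y) · (−log₂ Pr(L=0 | Y=y))`. -/
noncomputable def susp {Ω Y : Type*} [Fintype Ω] [Fintype Y] (p : Ω → ℝ)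
    (L : Ω → Bool) (Yv : Ω → Y) : ℝ :=
  ∑ y, Pr p {ω | Yv ω = y} * (-Real.logb 2 (cPr p {ω | L ω = false} {ω | Yv ω = y}))

/-- Mutual information (base 2) between two finite-valued random variables. -/
noncomputable def mutInfo {Ω S T : Type*} [Fintype Ω] [Fintype S] [Fintype T]
    (p : Ω → ℝ) (Xv : Ω → S) (Av : Ω → T) : ℝ :=
  ∑ x, ∑ a, Pr p {ω | Xv ω = x ∧ Av ω = a} *
    Real.logb 2 (Pr p {ω | Xv ω = x ∧ Av ω = a} /
      (Pr p {ω | Xv ω = x} * Pr p {ω | Av ω = a}))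

/-- Conditional Shannon entropy (base 2) `H(A | X)`. -/
noncomputable def condEntropy {Ω S T : Type*} [Fintype Ω] [Fintype S] [Fintype T]
    (p : Ω → ℝ) (Av : Ω → T) (Xv : Ω → S) : ℝ :=
  ∑ x, ∑ a, Pr p {ω | Xv ω = x ∧ Av ω = a} *
    Real.logb 2 (Pr p {ω | Xv ω = x} / Pr p {ω | Xv ω = x ∧ Av ω = a})

/-- Conditional mutual information (base 2) `I(X; A | Z)`. -/
noncomputable def condMutInfo {Ω S T U : Type*} [Fintype Ω] [Fintype S] [Fintype T] [Fintype U]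
    (p : Ω → ℝ) (Xv : Ω → S) (Av : Ω → T) (Zv : Ω → U) : ℝ :=
  ∑ z, ∑ x, ∑ a, Pr p {ω | Xv ω = x ∧ Av ω = a ∧ Zv ω = z} *
    Real.logb 2 ((Pr p {ω | Xv ω = x ∧ Av ω = a ∧ Zv ω = z} * Pr p {ω | Zv ω = z}) /
      (Pr p {ω | Xv ω = x ∧ Zv ω = z} * Pr p {ω | Av ω = a ∧ Zv ω = z}))

open Classical in
lemma Pr_eq_sum {Ω : Type*} [Fintype Ω] (p : Ω → ℝ) (E : Set Ω) :
    Pr p E = ∑ ω, if ω ∈ E then p ω else 0 := by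
  unfold Pr
  refine Finset.sum_congr rfl fun ω _ => ?_
  rw [Set.indicator_apply]

lemma Pr_nonneg {Ω : Type*} [Fintype Ω] {p : Ω → ℝ} (hp : ∀ ω, 0 ≤ p ω) (E : Set Ω) :
    0 ≤ Pr p E := by
  classical
  rw [Pr_eq_sum]
  exact Finset.sum_nonneg fun ω _ => by split <;> simp [hp ω]

lemma Pr_congr {Ω : Type*} [Fintype Ω] (p : Ω → ℝ) {E F : Set Ω}
    (h : ∀ ω, ω ∈ E ↔ ω ∈ F) : Pr p E = Pr p F := by
  have : E = F := Set.ext h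
  rw [this]

lemma Pr_mono {Ω : Type*} [Fintype Ω] {p : Ω → ℝ} (hp : ∀ ω, 0 ≤ p ω) {E F : Set Ω}
    (h : E ⊆ F) : Pr p E ≤ Pr p F := by
  classical
  rw [Pr_eq_sum, Pr_eq_sum]
  refine Finset.sum_le_sum fun ω _ => ?_
  by_cases hE : ω ∈ E
  · simp [hE, h hE]
  · simp only [hE, if_false]; split <;> simp [hp ω]

lemma Pr_empty {Ω : Type*} [Fintype Ω] (p : Ω → ℝ) : Pr p (∅ : Set Ω) = 0 := by
  simp [Pr_eq_sum]

lemma Pr_univ {Ω : Type*} [Fintype Ω] {p : Ω → ℝ} (hp1 : ∑ ω, p ω = 1) :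
    Pr p (Set.univ : Set Ω) = 1 := by
  simp [Pr_eq_sum, hp1]

lemma Pr_split {Ω Y : Type*} [Fintype Ω] [Fintype Y] (p : Ω → ℝ) (E : Set Ω) (f : Ω → Y) :
    Pr p E = ∑ y, Pr p (E ∩ {ω | f ω = y}) := by
  classical
  simp only [Pr_eq_sum]
  rw [Finset.sum_comm]
  refine Finset.sum_congr rfl fun ω _ => ?_
  by_cases hE : ω ∈ E
  · rw [Finset.sum_eq_single (f ω)]
    · simp [hE]
    · intro y _ hy; simp [Set.mem_inter_iff, hE]; intro h; exact absurd h.symm hy -- check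
    · simp
  · simp [hE]

lemma Pr_split_bool {Ω : Type*} [Fintype Ω] (p : Ω → ℝ) (E : Set Ω) (L : Ω → Bool) :
    Pr p E = Pr p (E ∩ {ω | L ω = false}) + Pr p (E ∩ {ω | L ω = true}) := by
  rw [Pr_split p E L]
  simp [Fintype.sum_bool]; ring

section
variable {Ω : Type*} [Fintype Ω] (p : Ω → ℝ)

lemma Pr_inter_fiber {V W : Type*} [Fintype V] [DecidableEq W]
    (E : Set Ω) (F : Ω → V) (g : V → W) (v : W) :
    Pr p (E ∩ {ω | g (F ω) = v}) = ∑ a, if g a = v then Pr p (E ∩ {ω | F ω = a}) else 0 := by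
  rw [Pr_split p (E ∩ {ω | g (F ω) = v}) F]
  refine Finset.sum_congr rfl fun a _ => ?_
  by_cases h : g a = v
  · rw [if_pos h]
    refine Pr_congr p fun ω => ?_
    simp only [Set.mem_inter_iff, Set.mem_setOf_eq]
    constructor
    · rintro ⟨⟨hE, _⟩, hF⟩; exact ⟨hE, hF⟩
    · rintro ⟨hE, hF⟩; exact ⟨⟨hE, hF ▸ h⟩, hF⟩
  · rw [if_neg h]
    rw [Pr_congr p (F := (∅ : Set Ω)) fun ω => ?_, Pr_empty]
    simp only [Set.mem_inter_iff, Set.mem_setOf_eq, Set.mem_empty_iff_false, iff_false]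
    rintro ⟨⟨_, hg⟩, hF⟩
    exact h (hF ▸ hg)

lemma sum_regroup {V W : Type*} [Fintype V] [Fintype W]
    (E : Set Ω) (F : Ω → V) (g : V → W) (h : W → ℝ) :
    ∑ v, Pr p (E ∩ {ω | g (F ω) = v}) * h v = ∑ a, Pr p (E ∩ {ω | F ω = a}) * h (g a) := by
  classical
  calc ∑ v, Pr p (E ∩ {ω | g (F ω) = v}) * h v
      = ∑ v, ∑ a, (if g a = v then Pr p (E ∩ {ω | F ω = a}) * h v else 0) := by
        refine Finset.sum_congr rfl fun v _ => ?_
        rw [Pr_inter_fiber p E F g v, Finset.sum_mul]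
        exact Finset.sum_congr rfl fun a _ => by split <;> simp
    _ = ∑ a, ∑ v, (if g a = v then Pr p (E ∩ {ω | F ω = a}) * h v else 0) := Finset.sum_comm
    _ = ∑ a, Pr p (E ∩ {ω | F ω = a}) * h (g a) := by
        refine Finset.sum_congr rfl fun a _ => ?_
        rw [Finset.sum_ite_eq]
        simp

lemma sum_fiber_total {V W : Type*} [Fintype V] [Fintype W]
    (E : Set Ω) (F : Ω → V) (g : V → W) :
    ∑ a, Pr p (E ∩ {ω | F ω = a}) = ∑ v, Pr p (E ∩ {ω | g (F ω) = v}) := by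
  have h1 := sum_regroup p E F g (fun _ => (1:ℝ))
  simpa using h1.symm

end

lemma logb_le_sub_one {t : ℝ} (ht : 0 < t) : Real.logb 2 t ≤ (t - 1) / Real.log 2 := by
  rw [Real.logb]
  have h2 : (0:ℝ) < Real.log 2 := by positivity
  gcongr
  exact Real.log_le_sub_one_of_pos ht

lemma one_sub_inv_le_logb {t : ℝ} (ht : 0 < t) : (1 - 1/t) / Real.log 2 ≤ Real.logb 2 t := by
  rw [Real.logb]
  have h2 : (0:ℝ) < Real.log 2 := by positivity
  have h := Real.log_le_sub_one_of_pos (by positivity : (0:ℝ) < 1/t)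
  rw [Real.log_div one_ne_zero (ne_of_gt ht), Real.log_one] at h
  have h3 : 1 - 1/t ≤ Real.log t := by linarith
  gcongr



lemma logb_combine {α β γ δ : ℝ} (hα : 0 < α) (hβ : 0 < β) (hγ : 0 < γ) (hδ : 0 < δ) :
    Real.logb 2 α + Real.logb 2 β - Real.logb 2 γ - Real.logb 2 δ =
      Real.logb 2 (α * β / (γ * δ)) := by
  rw [Real.logb_div (by positivity) (by positivity), Real.logb_mul (ne_of_gt hα) (ne_of_gt hβ),
    Real.logb_mul (ne_of_gt hγ) (ne_of_gt hδ)]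
  ring

section steps
variable {Ω S V W : Type*} [Fintype Ω] [Fintype S] [Fintype V] [Fintype W]
  (p : Ω → ℝ) (X : Ω → S) (A : Ω → V) (g : V → W) (L : Ω → Bool)

lemma susp_pair_regroup :
    susp p L (fun ω => (X ω, g (A ω))) =
      ∑ x, ∑ a, Pr p {ω | X ω = x ∧ A ω = a} *
        (-Real.logb 2 (Pr p {ω | X ω = x ∧ g (A ω) = g a ∧ L ω = false} /
          Pr p {ω | X ω = x ∧ g (A ω) = g a})) := by
  unfold susp
  rw [Fintype.sum_prod_type]
  refine Finset.sum_congr rfl fun x _ => ?_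
  have step1 : ∀ v : W, Pr p {ω | (X ω, g (A ω)) = (x, v)} =
      Pr p ({ω | X ω = x} ∩ {ω | g (A ω) = v}) := fun v =>
    Pr_congr p fun ω => by
      simp only [Set.mem_setOf_eq, Prod.mk.injEq, Set.mem_inter_iff]
  calc ∑ v, Pr p {ω | (X ω, g (A ω)) = (x, v)} *
        (-Real.logb 2 (cPr p {ω | L ω = false} {ω | (X ω, g (A ω)) = (x, v)}))
      = ∑ v, Pr p ({ω | X ω = x} ∩ {ω | g (A ω) = v}) *
        (-Real.logb 2 (cPr p {ω | L ω = false} {ω | (X ω, g (A ω)) = (x, v)})) := by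
        exact Finset.sum_congr rfl fun v _ => by rw [step1]
    _ = ∑ a, Pr p ({ω | X ω = x} ∩ {ω | A ω = a}) *
        (-Real.logb 2 (cPr p {ω | L ω = false} {ω | (X ω, g (A ω)) = (x, g a)})) :=
        sum_regroup p _ A g _
    _ = _ := by
        refine Finset.sum_congr rfl fun a _ => ?_
        have h1 : Pr p ({ω | X ω = x} ∩ {ω | A ω = a}) = Pr p {ω | X ω = x ∧ A ω = a} :=
          Pr_congr p fun ω => by simp only [Set.mem_inter_iff, Set.mem_setOf_eq]
        have h2 : cPr p {ω | L ω = false} {ω | (X ω, g (A ω)) = (x, g a)} =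
            Pr p {ω | X ω = x ∧ g (A ω) = g a ∧ L ω = false} /
              Pr p {ω | X ω = x ∧ g (A ω) = g a} := by
          unfold cPr
          rw [Pr_congr p (E := {ω | L ω = false} ∩ {ω | (X ω, g (A ω)) = (x, g a)})
              (F := {ω | X ω = x ∧ g (A ω) = g a ∧ L ω = false}) fun ω => by
              simp only [Set.mem_inter_iff, Set.mem_setOf_eq, Prod.mk.injEq]; tauto]
          rw [Pr_congr p (E := {ω | (X ω, g (A ω)) = (x, g a)})
              (F := {ω | X ω = x ∧ g (A ω) = g a}) fun ω => by
              simp only [Set.mem_setOf_eq, Prod.mk.injEq]]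
        rw [h1, h2]

lemma mutInfo_regroup :
    mutInfo p X (fun ω => g (A ω)) =
      ∑ x, ∑ a, Pr p {ω | X ω = x ∧ A ω = a} *
        Real.logb 2 (Pr p {ω | X ω = x ∧ g (A ω) = g a} /
          (Pr p {ω | X ω = x} * Pr p {ω | g (A ω) = g a})) := by
  unfold mutInfo
  refine Finset.sum_congr rfl fun x _ => ?_
  have step1 : ∀ v : W, Pr p {ω | X ω = x ∧ g (A ω) = v} =
      Pr p ({ω | X ω = x} ∩ {ω | g (A ω) = v}) := fun v =>
    Pr_congr p fun ω => by simp only [Set.mem_setOf_eq, Set.mem_inter_iff]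
  calc ∑ v, Pr p {ω | X ω = x ∧ g (A ω) = v} *
        Real.logb 2 (Pr p {ω | X ω = x ∧ g (A ω) = v} /
          (Pr p {ω | X ω = x} * Pr p {ω | g (A ω) = v}))
      = ∑ v, Pr p ({ω | X ω = x} ∩ {ω | g (A ω) = v}) *
        Real.logb 2 (Pr p {ω | X ω = x ∧ g (A ω) = v} /
          (Pr p {ω | X ω = x} * Pr p {ω | g (A ω) = v})) := by
        exact Finset.sum_congr rfl fun v _ => by rw [step1]
    _ = ∑ a, Pr p ({ω | X ω = x} ∩ {ω | A ω = a}) *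
        Real.logb 2 (Pr p {ω | X ω = x ∧ g (A ω) = g a} /
          (Pr p {ω | X ω = x} * Pr p {ω | g (A ω) = g a})) :=
        sum_regroup p _ A g _
    _ = _ := by
        refine Finset.sum_congr rfl fun a _ => ?_
        have h1 : Pr p ({ω | X ω = x} ∩ {ω | A ω = a}) = Pr p {ω | X ω = x ∧ A ω = a} :=
          Pr_congr p fun ω => by simp only [Set.mem_inter_iff, Set.mem_setOf_eq]
        rw [h1]

lemma susp_pair_eq :
    susp p L (fun ω => (X ω, A ω)) =
      ∑ x, ∑ a, Pr p {ω | X ω = x ∧ A ω = a} *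
        (-Real.logb 2 (Pr p {ω | X ω = x ∧ A ω = a ∧ L ω = false} /
          Pr p {ω | X ω = x ∧ A ω = a})) := by
  have h := susp_pair_regroup p X A id L
  simpa only [id] using h

end steps

lemma exists_pos_of_sum_ite {V W : Type*} [Fintype V] (g : V → W) (w : W) (f : V → ℝ)
    [DecidableEq W]
    (h : 0 < ∑ a, if g a = w then f a else 0) : ∃ a, g a = w ∧ 0 < f a := by
  by_contra hc
  push_neg at hc
  have : ∑ a, (if g a = w then f a else 0) ≤ 0 := by
    refine Finset.sum_nonpos fun a _ => ?_
    by_cases hga : g a = w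
    · simpa [hga] using hc a hga
    · simp [hga]
  linarith

section steps2
variable {Ω S V W : Type*} [Fintype Ω] [Fintype S] [Fintype V] [Fintype W]
  (p : Ω → ℝ) (X : Ω → S) (A : Ω → V) (g : V → W) (L : Ω → Bool)

/-- If `0 < Pr(X=x ∧ g∘A = w)` then some cell of the fiber is positive. -/
lemma fiber_pos (x : S) (w : W)
    (h : 0 < Pr p {ω | X ω = x ∧ g (A ω) = w}) :
    ∃ a, g a = w ∧ 0 < Pr p {ω | X ω = x ∧ A ω = a} := by
  classical
  have h0 : Pr p {ω | X ω = x ∧ g (A ω) = w} =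
      ∑ a, if g a = w then Pr p ({ω | X ω = x} ∩ {ω | A ω = a}) else 0 := by
    rw [← Pr_inter_fiber p {ω | X ω = x} A g w]
    exact Pr_congr p fun ω => by simp only [Set.mem_setOf_eq, Set.mem_inter_iff]
  rw [h0] at h
  obtain ⟨a, hga, hpos⟩ := exists_pos_of_sum_ite g w _ h
  refine ⟨a, hga, ?_⟩
  rwa [Pr_congr p (E := {ω | X ω = x} ∩ {ω | A ω = a}) (F := {ω | X ω = x ∧ A ω = a})
    (fun ω => by simp only [Set.mem_inter_iff, Set.mem_setOf_eq])] at hpos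

lemma susp_mono_step (hp : ∀ ω, 0 ≤ p ω)
    (hXAL : ∀ x a, 0 < Pr p {ω | X ω = x ∧ A ω = a} →
      0 < Pr p {ω | X ω = x ∧ A ω = a ∧ L ω = false}) :
    susp p L (fun ω => (X ω, g (A ω))) ≤ susp p L (fun ω => (X ω, A ω)) := by
  classical
  rw [susp_pair_regroup p X A g L, susp_pair_eq p X A L, ← sub_nonpos,
    ← Finset.sum_sub_distrib]
  have key : ∀ x a,
      Pr p {ω | X ω = x ∧ A ω = a} *
          (-Real.logb 2 (Pr p {ω | X ω = x ∧ g (A ω) = g a ∧ L ω = false} /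
            Pr p {ω | X ω = x ∧ g (A ω) = g a})) -
        Pr p {ω | X ω = x ∧ A ω = a} *
          (-Real.logb 2 (Pr p {ω | X ω = x ∧ A ω = a ∧ L ω = false} /
            Pr p {ω | X ω = x ∧ A ω = a})) ≤
      (Pr p {ω | X ω = x ∧ A ω = a ∧ L ω = false} *
          (Pr p {ω | X ω = x ∧ g (A ω) = g a} /
            Pr p {ω | X ω = x ∧ g (A ω) = g a ∧ L ω = false}) -
        Pr p {ω | X ω = x ∧ A ω = a}) / Real.log 2 := by
    intro x a
    by_cases hPXA : 0 < Pr p {ω | X ω = x ∧ A ω = a}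
    · have hLXA := hXAL x a hPXA
      have hsub1 : {ω | X ω = x ∧ A ω = a} ⊆ {ω | X ω = x ∧ g (A ω) = g a} := by
        rintro ω ⟨h1, h2⟩; exact ⟨h1, by rw [h2]⟩
      have hsub2 : {ω | X ω = x ∧ A ω = a ∧ L ω = false} ⊆
          {ω | X ω = x ∧ g (A ω) = g a ∧ L ω = false} := by
        rintro ω ⟨h1, h2, h3⟩; exact ⟨h1, by rw [h2], h3⟩
      have hPXZ : 0 < Pr p {ω | X ω = x ∧ g (A ω) = g a} := hPXA.trans_le (Pr_mono hp hsub1)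
      have hLXZ : 0 < Pr p {ω | X ω = x ∧ g (A ω) = g a ∧ L ω = false} :=
        hLXA.trans_le (Pr_mono hp hsub2)
      set PXA := Pr p {ω | X ω = x ∧ A ω = a}
      set LXA := Pr p {ω | X ω = x ∧ A ω = a ∧ L ω = false}
      set PXZ := Pr p {ω | X ω = x ∧ g (A ω) = g a}
      set LXZ := Pr p {ω | X ω = x ∧ g (A ω) = g a ∧ L ω = false}
      have hq1 : 0 < LXA / PXA := by positivity
      have hq2 : 0 < LXZ / PXZ := by positivity
      have e1 : PXA * (-Real.logb 2 (LXZ / PXZ)) - PXA * (-Real.logb 2 (LXA / PXA)) =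
          PXA * Real.logb 2 ((LXA / PXA) / (LXZ / PXZ)) := by
        rw [Real.logb_div (ne_of_gt hq1) (ne_of_gt hq2)]; ring
      rw [e1]
      have e2 : PXA * Real.logb 2 ((LXA / PXA) / (LXZ / PXZ)) ≤
          PXA * (((LXA / PXA) / (LXZ / PXZ) - 1) / Real.log 2) :=
        mul_le_mul_of_nonneg_left (logb_le_sub_one (by positivity)) (le_of_lt hPXA)
      refine e2.trans_eq ?_
      have h1 := ne_of_gt hPXA
      have h2 := ne_of_gt hLXZ
      have h3 := ne_of_gt hPXZ
      rw [← mul_div_assoc]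
      rw [show PXA * (LXA / PXA / (LXZ / PXZ) - 1) = LXA * (PXZ / LXZ) - PXA from by
        field_simp]
    · have h0 : Pr p {ω | X ω = x ∧ A ω = a} = 0 :=
        le_antisymm (not_lt.mp hPXA) (Pr_nonneg hp _)
      have h0' : Pr p {ω | X ω = x ∧ A ω = a ∧ L ω = false} = 0 :=
        le_antisymm (le_of_le_of_eq
          (Pr_mono hp (Set.setOf_subset_setOf.mpr fun ω h => ⟨h.1, h.2.1⟩)) h0)
          (Pr_nonneg hp _)
      simp [h0, h0']
  have total : ∑ x, ∑ a,
      ((Pr p {ω | X ω = x ∧ A ω = a ∧ L ω = false} *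
          (Pr p {ω | X ω = x ∧ g (A ω) = g a} /
            Pr p {ω | X ω = x ∧ g (A ω) = g a ∧ L ω = false}) -
        Pr p {ω | X ω = x ∧ A ω = a}) / Real.log 2) = 0 := by
    have inner : ∀ x, ∑ a,
        (Pr p {ω | X ω = x ∧ A ω = a ∧ L ω = false} *
            (Pr p {ω | X ω = x ∧ g (A ω) = g a} /
              Pr p {ω | X ω = x ∧ g (A ω) = g a ∧ L ω = false}) -
          Pr p {ω | X ω = x ∧ A ω = a}) = 0 := by
      intro x
      rw [Finset.sum_sub_distrib]
      have c1 : ∀ a : V, Pr p {ω | X ω = x ∧ A ω = a ∧ L ω = false} =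
          Pr p (({ω | X ω = x} ∩ {ω | L ω = false}) ∩ {ω | A ω = a}) := fun a =>
        Pr_congr p fun ω => by
          simp only [Set.mem_setOf_eq, Set.mem_inter_iff]; tauto
      have c2 : ∀ w : W, Pr p {ω | X ω = x ∧ g (A ω) = w ∧ L ω = false} =
          Pr p (({ω | X ω = x} ∩ {ω | L ω = false}) ∩ {ω | g (A ω) = w}) := fun w =>
        Pr_congr p fun ω => by
          simp only [Set.mem_setOf_eq, Set.mem_inter_iff]; tauto
      have e3 : ∑ a, Pr p {ω | X ω = x ∧ A ω = a ∧ L ω = false} *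
          (Pr p {ω | X ω = x ∧ g (A ω) = g a} /
            Pr p {ω | X ω = x ∧ g (A ω) = g a ∧ L ω = false}) =
          ∑ w, Pr p {ω | X ω = x ∧ g (A ω) = w ∧ L ω = false} *
          (Pr p {ω | X ω = x ∧ g (A ω) = w} /
            Pr p {ω | X ω = x ∧ g (A ω) = w ∧ L ω = false}) := by
        calc ∑ a, Pr p {ω | X ω = x ∧ A ω = a ∧ L ω = false} *
              (Pr p {ω | X ω = x ∧ g (A ω) = g a} /
                Pr p {ω | X ω = x ∧ g (A ω) = g a ∧ L ω = false})
            = ∑ a, Pr p (({ω | X ω = x} ∩ {ω | L ω = false}) ∩ {ω | A ω = a}) *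
              (Pr p {ω | X ω = x ∧ g (A ω) = g a} /
                Pr p {ω | X ω = x ∧ g (A ω) = g a ∧ L ω = false}) :=
              Finset.sum_congr rfl fun a _ => by rw [c1]
          _ = ∑ w, Pr p (({ω | X ω = x} ∩ {ω | L ω = false}) ∩ {ω | g (A ω) = w}) *
              (Pr p {ω | X ω = x ∧ g (A ω) = w} /
                Pr p {ω | X ω = x ∧ g (A ω) = w ∧ L ω = false}) :=
              (sum_regroup p ({ω | X ω = x} ∩ {ω | L ω = false}) A g
                (fun w => Pr p {ω | X ω = x ∧ g (A ω) = w} /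
                  Pr p {ω | X ω = x ∧ g (A ω) = w ∧ L ω = false})).symm
          _ = ∑ w, Pr p {ω | X ω = x ∧ g (A ω) = w ∧ L ω = false} *
              (Pr p {ω | X ω = x ∧ g (A ω) = w} /
                Pr p {ω | X ω = x ∧ g (A ω) = w ∧ L ω = false}) :=
              Finset.sum_congr rfl fun w _ => by rw [← c2]
      have e4 : ∑ a, Pr p {ω | X ω = x ∧ A ω = a} =
          ∑ w, Pr p {ω | X ω = x ∧ g (A ω) = w} := by
        have := sum_fiber_total p ({ω | X ω = x}) A g
        calc ∑ a, Pr p {ω | X ω = x ∧ A ω = a}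
            = ∑ a, Pr p ({ω | X ω = x} ∩ {ω | A ω = a}) :=
              Finset.sum_congr rfl fun a _ => Pr_congr p fun ω => by
                simp only [Set.mem_setOf_eq, Set.mem_inter_iff]
          _ = ∑ w, Pr p ({ω | X ω = x} ∩ {ω | g (A ω) = w}) := this
          _ = ∑ w, Pr p {ω | X ω = x ∧ g (A ω) = w} :=
              Finset.sum_congr rfl fun w _ => Pr_congr p fun ω => by
                simp only [Set.mem_setOf_eq, Set.mem_inter_iff]
      rw [e3, e4, ← Finset.sum_sub_distrib]
      refine Finset.sum_eq_zero fun w _ => ?_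
      by_cases hPXZ : 0 < Pr p {ω | X ω = x ∧ g (A ω) = w}
      · obtain ⟨a, hga, hPXA⟩ := fiber_pos p X A g x w hPXZ
        have hLXA := hXAL x a hPXA
        have hLXZ : 0 < Pr p {ω | X ω = x ∧ g (A ω) = w ∧ L ω = false} := by
          refine hLXA.trans_le (Pr_mono hp ?_)
          rintro ω ⟨h1, h2, h3⟩; exact ⟨h1, by rw [h2, hga], h3⟩
        rw [mul_comm, div_mul_cancel₀ _ (ne_of_gt hLXZ), sub_self]
      · have h0 : Pr p {ω | X ω = x ∧ g (A ω) = w} = 0 :=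
          le_antisymm (not_lt.mp hPXZ) (Pr_nonneg hp _)
        have h0' : Pr p {ω | X ω = x ∧ g (A ω) = w ∧ L ω = false} = 0 :=
          le_antisymm (le_of_le_of_eq
            (Pr_mono hp (Set.setOf_subset_setOf.mpr fun ω h => ⟨h.1, h.2.1⟩)) h0)
            (Pr_nonneg hp _)
        simp [h0, h0']
    refine Finset.sum_eq_zero fun x _ => ?_
    rw [← Finset.sum_div, inner x, zero_div]
  refine le_trans (Finset.sum_le_sum fun x _ => ?_) (le_of_eq total)
  refine le_trans (le_of_eq (Finset.sum_sub_distrib ..).symm) ?_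
  exact Finset.sum_le_sum fun a _ => key x a

end steps2

section steps3
variable {Ω S V W : Type*} [Fintype Ω] [Fintype S] [Fintype V] [Fintype W]
  (p : Ω → ℝ) (X : Ω → S) (A : Ω → V) (g : V → W) (L : Ω → Bool)

lemma sum_PXA (a : V) :
    ∑ x, Pr p {ω | X ω = x ∧ A ω = a} = Pr p {ω | A ω = a} := by
  rw [Pr_split p {ω | A ω = a} X]
  exact Finset.sum_congr rfl fun x _ => Pr_congr p fun ω => by
    simp only [Set.mem_inter_iff, Set.mem_setOf_eq]; tauto

lemma sum_PA (hp1 : ∑ ω, p ω = 1) :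
    ∑ a, Pr p {ω | A ω = a} = 1 := by
  rw [show ∑ a, Pr p {ω | A ω = a} = ∑ a, Pr p (Set.univ ∩ {ω | A ω = a}) from
    Finset.sum_congr rfl fun a _ => Pr_congr p fun ω => by
      simp only [Set.mem_inter_iff, Set.mem_setOf_eq, Set.mem_univ, true_and],
    ← Pr_split p Set.univ A, Pr_univ hp1]

lemma speaker_step (hp : ∀ ω, 0 ≤ p ω) (hp1 : ∑ ω, p ω = 1)
    (hXAL : ∀ x a, 0 < Pr p {ω | X ω = x ∧ A ω = a} →
      0 < Pr p {ω | X ω = x ∧ A ω = a ∧ L ω = false})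
    (hind : ∀ x a, 0 < Pr p {ω | X ω = x ∧ g (A ω) = g a ∧ L ω = false} →
      Pr p {ω | X ω = x ∧ A ω = a ∧ L ω = false} * Pr p {ω | g (A ω) = g a ∧ L ω = false} =
      Pr p {ω | A ω = a ∧ L ω = false} * Pr p {ω | X ω = x ∧ g (A ω) = g a ∧ L ω = false}) :
    mutInfo p X A - mutInfo p X (fun ω => g (A ω)) ≤
      susp p L (fun ω => (X ω, A ω)) - susp p L (fun ω => (X ω, g (A ω))) := by
  classical
  rw [mutInfo_regroup p X A g, susp_pair_eq p X A L, susp_pair_regroup p X A g L]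
  unfold mutInfo
  -- termwise bound
  have key : ∀ x a,
      Pr p {ω | X ω = x ∧ A ω = a} *
          Real.logb 2 (Pr p {ω | X ω = x ∧ A ω = a} /
            (Pr p {ω | X ω = x} * Pr p {ω | A ω = a})) -
        Pr p {ω | X ω = x ∧ A ω = a} *
          Real.logb 2 (Pr p {ω | X ω = x ∧ g (A ω) = g a} /
            (Pr p {ω | X ω = x} * Pr p {ω | g (A ω) = g a})) +
        Pr p {ω | X ω = x ∧ A ω = a} *
          (-Real.logb 2 (Pr p {ω | X ω = x ∧ g (A ω) = g a ∧ L ω = false} /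
            Pr p {ω | X ω = x ∧ g (A ω) = g a})) -
        Pr p {ω | X ω = x ∧ A ω = a} *
          (-Real.logb 2 (Pr p {ω | X ω = x ∧ A ω = a ∧ L ω = false} /
            Pr p {ω | X ω = x ∧ A ω = a})) ≤
      (Pr p {ω | X ω = x ∧ A ω = a} *
          ((Pr p {ω | A ω = a ∧ L ω = false} *
            (Pr p {ω | g (A ω) = g a} / Pr p {ω | g (A ω) = g a ∧ L ω = false})) /
            Pr p {ω | A ω = a}) -
        Pr p {ω | X ω = x ∧ A ω = a}) / Real.log 2 := by
    intro x a
    by_cases hPXA : 0 < Pr p {ω | X ω = x ∧ A ω = a}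
    · have hLXA := hXAL x a hPXA
      have hPX : 0 < Pr p {ω | X ω = x} :=
        hPXA.trans_le (Pr_mono hp (Set.setOf_subset_setOf.mpr fun ω h => h.1))
      have hPA : 0 < Pr p {ω | A ω = a} :=
        hPXA.trans_le (Pr_mono hp (Set.setOf_subset_setOf.mpr fun ω h => h.2))
      have hPXZ : 0 < Pr p {ω | X ω = x ∧ g (A ω) = g a} :=
        hPXA.trans_le (Pr_mono hp (Set.setOf_subset_setOf.mpr fun ω h => ⟨h.1, by rw [h.2]⟩))
      have hPZ : 0 < Pr p {ω | g (A ω) = g a} :=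
        hPA.trans_le (Pr_mono hp (Set.setOf_subset_setOf.mpr fun ω h => by rw [h]))
      have hLXZ : 0 < Pr p {ω | X ω = x ∧ g (A ω) = g a ∧ L ω = false} :=
        hLXA.trans_le (Pr_mono hp (Set.setOf_subset_setOf.mpr fun ω h =>
          ⟨h.1, by rw [h.2.1], h.2.2⟩))
      have hLA : 0 < Pr p {ω | A ω = a ∧ L ω = false} :=
        hLXA.trans_le (Pr_mono hp (Set.setOf_subset_setOf.mpr fun ω h => ⟨h.2.1, h.2.2⟩))
      have hLZ : 0 < Pr p {ω | g (A ω) = g a ∧ L ω = false} :=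
        hLA.trans_le (Pr_mono hp (Set.setOf_subset_setOf.mpr fun ω h => ⟨by rw [h.1], h.2⟩))
      have hindeq := hind x a hLXZ
      set PXA := Pr p {ω | X ω = x ∧ A ω = a}
      set PX := Pr p {ω | X ω = x}
      set PA := Pr p {ω | A ω = a}
      set PXZ := Pr p {ω | X ω = x ∧ g (A ω) = g a}
      set PZ := Pr p {ω | g (A ω) = g a}
      set LXA := Pr p {ω | X ω = x ∧ A ω = a ∧ L ω = false}
      set LXZ := Pr p {ω | X ω = x ∧ g (A ω) = g a ∧ L ω = false}
      set LA := Pr p {ω | A ω = a ∧ L ω = false}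
      set LZ := Pr p {ω | g (A ω) = g a ∧ L ω = false}
      have e1 : PXA * Real.logb 2 (PXA / (PX * PA)) -
          PXA * Real.logb 2 (PXZ / (PX * PZ)) +
          PXA * (-Real.logb 2 (LXZ / PXZ)) - PXA * (-Real.logb 2 (LXA / PXA)) =
          PXA * (Real.logb 2 (PXA / (PX * PA)) + Real.logb 2 (LXA / PXA) -
            Real.logb 2 (PXZ / (PX * PZ)) - Real.logb 2 (LXZ / PXZ)) := by ring
      rw [e1, logb_combine (by positivity) (by positivity) (by positivity) (by positivity)]
      have hr : LXA = LA * LXZ / LZ := (eq_div_iff (ne_of_gt hLZ)).mpr hindeq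
      have harg : PXA / (PX * PA) * (LXA / PXA) / (PXZ / (PX * PZ) * (LXZ / PXZ)) =
          LA * (PZ / LZ) / PA := by
        rw [hr]; field_simp
      rw [harg]
      have hpos : 0 < LA * (PZ / LZ) / PA := by positivity
      refine (mul_le_mul_of_nonneg_left (logb_le_sub_one hpos) (le_of_lt hPXA)).trans_eq ?_
      rw [← mul_div_assoc, mul_sub, mul_one]
    · have h0 : Pr p {ω | X ω = x ∧ A ω = a} = 0 :=
        le_antisymm (not_lt.mp hPXA) (Pr_nonneg hp _)
      simp [h0]
  -- total bound
  have total : ∑ x, ∑ a,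
      ((Pr p {ω | X ω = x ∧ A ω = a} *
          ((Pr p {ω | A ω = a ∧ L ω = false} *
            (Pr p {ω | g (A ω) = g a} / Pr p {ω | g (A ω) = g a ∧ L ω = false})) /
            Pr p {ω | A ω = a}) -
        Pr p {ω | X ω = x ∧ A ω = a}) / Real.log 2) ≤ 0 := by
    rw [Finset.sum_comm]
    have inner_eq : ∀ a : V, ∑ x,
        ((Pr p {ω | X ω = x ∧ A ω = a} *
            ((Pr p {ω | A ω = a ∧ L ω = false} *
              (Pr p {ω | g (A ω) = g a} / Pr p {ω | g (A ω) = g a ∧ L ω = false})) /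
              Pr p {ω | A ω = a}) -
          Pr p {ω | X ω = x ∧ A ω = a}) / Real.log 2) =
        (Pr p {ω | A ω = a} *
            ((Pr p {ω | A ω = a ∧ L ω = false} *
              (Pr p {ω | g (A ω) = g a} / Pr p {ω | g (A ω) = g a ∧ L ω = false})) /
              Pr p {ω | A ω = a}) -
          Pr p {ω | A ω = a}) / Real.log 2 := by
      intro a
      rw [← Finset.sum_div, Finset.sum_sub_distrib, ← Finset.sum_mul, sum_PXA p X A a]
    rw [Finset.sum_congr rfl fun a _ => inner_eq a, ← Finset.sum_div]
    apply div_nonpos_of_nonpos_of_nonneg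
    · rw [Finset.sum_sub_distrib, sum_PA p A hp1, sub_nonpos]
      have step1 : ∀ a : V, Pr p {ω | A ω = a} *
          ((Pr p {ω | A ω = a ∧ L ω = false} *
            (Pr p {ω | g (A ω) = g a} / Pr p {ω | g (A ω) = g a ∧ L ω = false})) /
            Pr p {ω | A ω = a}) ≤
          Pr p {ω | A ω = a ∧ L ω = false} *
            (Pr p {ω | g (A ω) = g a} / Pr p {ω | g (A ω) = g a ∧ L ω = false}) := by
        intro a
        by_cases hPA : 0 < Pr p {ω | A ω = a}
        · rw [mul_div_cancel₀ _ (ne_of_gt hPA)]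
        · have h0 : Pr p {ω | A ω = a} = 0 :=
            le_antisymm (not_lt.mp hPA) (Pr_nonneg hp _)
          rw [h0, zero_mul]
          have h1 := Pr_nonneg hp (p := p) {ω | A ω = a ∧ L ω = false}
          have h2 := Pr_nonneg hp (p := p) {ω | g (A ω) = g a}
          have h3 := Pr_nonneg hp (p := p) {ω | g (A ω) = g a ∧ L ω = false}
          positivity
      refine le_trans (Finset.sum_le_sum fun a _ => step1 a) ?_
      have regro : ∑ a, Pr p {ω | A ω = a ∧ L ω = false} *
          (Pr p {ω | g (A ω) = g a} / Pr p {ω | g (A ω) = g a ∧ L ω = false}) =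
          ∑ w, Pr p {ω | g (A ω) = w ∧ L ω = false} *
          (Pr p {ω | g (A ω) = w} / Pr p {ω | g (A ω) = w ∧ L ω = false}) := by
        calc ∑ a, Pr p {ω | A ω = a ∧ L ω = false} *
              (Pr p {ω | g (A ω) = g a} / Pr p {ω | g (A ω) = g a ∧ L ω = false})
            = ∑ a, Pr p ({ω | L ω = false} ∩ {ω | A ω = a}) *
              (Pr p {ω | g (A ω) = g a} / Pr p {ω | g (A ω) = g a ∧ L ω = false}) :=
              Finset.sum_congr rfl fun a _ => by
                rw [Pr_congr p (E := {ω | A ω = a ∧ L ω = false})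
                  (F := {ω | L ω = false} ∩ {ω | A ω = a}) fun ω => by
                    simp only [Set.mem_inter_iff, Set.mem_setOf_eq]; tauto]
          _ = ∑ w, Pr p ({ω | L ω = false} ∩ {ω | g (A ω) = w}) *
              (Pr p {ω | g (A ω) = w} / Pr p {ω | g (A ω) = w ∧ L ω = false}) :=
              (sum_regroup p {ω | L ω = false} A g (fun w => Pr p {ω | g (A ω) = w} / Pr p {ω | g (A ω) = w ∧ L ω = false})).symm
          _ = _ := Finset.sum_congr rfl fun w _ => by
              rw [Pr_congr p (E := {ω | L ω = false} ∩ {ω | g (A ω) = w})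
                (F := {ω | g (A ω) = w ∧ L ω = false}) fun ω => by
                  simp only [Set.mem_inter_iff, Set.mem_setOf_eq]; tauto]
      rw [regro]
      have step2 : ∀ w : W, Pr p {ω | g (A ω) = w ∧ L ω = false} *
          (Pr p {ω | g (A ω) = w} / Pr p {ω | g (A ω) = w ∧ L ω = false}) ≤
          Pr p {ω | g (A ω) = w} := by
        intro w
        by_cases hLZ : 0 < Pr p {ω | g (A ω) = w ∧ L ω = false}
        · rw [mul_comm, div_mul_cancel₀ _ (ne_of_gt hLZ)]
        · have h0 : Pr p {ω | g (A ω) = w ∧ L ω = false} = 0 :=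
            le_antisymm (not_lt.mp hLZ) (Pr_nonneg hp _)
          rw [h0, zero_mul]
          exact Pr_nonneg hp _
      refine le_trans (Finset.sum_le_sum fun w _ => step2 w) ?_
      exact le_of_eq (sum_PA p (fun ω => g (A ω)) hp1)
    · exact Real.log_nonneg (by norm_num)
  -- combine
  have hterm := fun x a => key x a
  have expand : ∑ x, ∑ a,
      (Pr p {ω | X ω = x ∧ A ω = a} *
          Real.logb 2 (Pr p {ω | X ω = x ∧ A ω = a} /
            (Pr p {ω | X ω = x} * Pr p {ω | A ω = a})) -
        Pr p {ω | X ω = x ∧ A ω = a} *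
          Real.logb 2 (Pr p {ω | X ω = x ∧ g (A ω) = g a} /
            (Pr p {ω | X ω = x} * Pr p {ω | g (A ω) = g a})) +
        Pr p {ω | X ω = x ∧ A ω = a} *
          (-Real.logb 2 (Pr p {ω | X ω = x ∧ g (A ω) = g a ∧ L ω = false} /
            Pr p {ω | X ω = x ∧ g (A ω) = g a})) -
        Pr p {ω | X ω = x ∧ A ω = a} *
          (-Real.logb 2 (Pr p {ω | X ω = x ∧ A ω = a ∧ L ω = false} /
            Pr p {ω | X ω = x ∧ A ω = a}))) ≤ 0 :=
    le_trans (Finset.sum_le_sum fun x _ => Finset.sum_le_sum fun a _ => key x a) total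
  have distrib : ∀ x : S, ∑ a,
      (Pr p {ω | X ω = x ∧ A ω = a} *
          Real.logb 2 (Pr p {ω | X ω = x ∧ A ω = a} /
            (Pr p {ω | X ω = x} * Pr p {ω | A ω = a})) -
        Pr p {ω | X ω = x ∧ A ω = a} *
          Real.logb 2 (Pr p {ω | X ω = x ∧ g (A ω) = g a} /
            (Pr p {ω | X ω = x} * Pr p {ω | g (A ω) = g a})) +
        Pr p {ω | X ω = x ∧ A ω = a} *
          (-Real.logb 2 (Pr p {ω | X ω = x ∧ g (A ω) = g a ∧ L ω = false} /
            Pr p {ω | X ω = x ∧ g (A ω) = g a})) -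
        Pr p {ω | X ω = x ∧ A ω = a} *
          (-Real.logb 2 (Pr p {ω | X ω = x ∧ A ω = a ∧ L ω = false} /
            Pr p {ω | X ω = x ∧ A ω = a}))) =
      (∑ a, Pr p {ω | X ω = x ∧ A ω = a} *
          Real.logb 2 (Pr p {ω | X ω = x ∧ A ω = a} /
            (Pr p {ω | X ω = x} * Pr p {ω | A ω = a}))) -
      (∑ a, Pr p {ω | X ω = x ∧ A ω = a} *
          Real.logb 2 (Pr p {ω | X ω = x ∧ g (A ω) = g a} /
            (Pr p {ω | X ω = x} * Pr p {ω | g (A ω) = g a}))) +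
      (∑ a, Pr p {ω | X ω = x ∧ A ω = a} *
          (-Real.logb 2 (Pr p {ω | X ω = x ∧ g (A ω) = g a ∧ L ω = false} /
            Pr p {ω | X ω = x ∧ g (A ω) = g a}))) -
      (∑ a, Pr p {ω | X ω = x ∧ A ω = a} *
          (-Real.logb 2 (Pr p {ω | X ω = x ∧ A ω = a ∧ L ω = false} /
            Pr p {ω | X ω = x ∧ A ω = a}))) := fun x => by
    rw [Finset.sum_sub_distrib, Finset.sum_add_distrib, Finset.sum_sub_distrib]
  rw [Finset.sum_congr rfl fun x _ => distrib x] at expand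
  rw [Finset.sum_sub_distrib, Finset.sum_add_distrib, Finset.sum_sub_distrib] at expand
  linarith
end steps3

lemma chord_bound {c t : ℝ} (hc0 : 0 < c) (hc1 : c < 1) (h1 : 1 - c ≤ t) (h2 : t ≤ 1) :
    -Real.logb 2 t ≤ (1 - t) / c * (-Real.logb 2 (1 - c)) := by
  have ht0 : 0 < t := lt_of_lt_of_le (by linarith) h1
  set lam := (1 - t) / c with hlam
  have hl0 : 0 ≤ lam := div_nonneg (by linarith) (le_of_lt hc0)
  have hl1 : 0 ≤ 1 - lam := by
    have : (1 - t) / c ≤ 1 := by rw [div_le_one hc0]; linarith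
    linarith
  have hcomb : lam • (1 - c) + (1 - lam) • (1 : ℝ) = t := by
    simp only [smul_eq_mul, hlam]
    field_simp
    ring
  have hkey := (strictConcaveOn_log_Ioi.concaveOn).2
    (Set.mem_Ioi.mpr (by linarith : (0:ℝ) < 1 - c))
    (Set.mem_Ioi.mpr (by norm_num : (0:ℝ) < 1))
    hl0 hl1 (by ring)
  rw [hcomb] at hkey
  simp only [smul_eq_mul, Real.log_one, mul_zero, add_zero] at hkey
  have hlog2 : 0 < Real.log 2 := by positivity
  rw [Real.logb, Real.logb, hlam]
  have e : (1 - t) / c * -(Real.log (1 - c) / Real.log 2) =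
      -((1 - t) / c * Real.log (1 - c)) / Real.log 2 := by ring
  have e2 : -(Real.log t / Real.log 2) = -Real.log t / Real.log 2 := by ring
  rw [e, e2]
  gcongr


section finals
variable {Ω S V : Type*} [Fintype Ω] [Fintype S] [Fintype V]
  (p : Ω → ℝ) (X : Ω → S) (F : Ω → V) (L : Ω → Bool)

lemma mutInfo_const (hp : ∀ ω, 0 ≤ p ω) (hp1 : ∑ ω, p ω = 1) (c0 : V) :
    mutInfo p X (fun _ => c0) = 0 := by
  unfold mutInfo
  refine Finset.sum_eq_zero fun x _ => Finset.sum_eq_zero fun a _ => ?_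
  by_cases ha : a = c0
  · subst ha
    have h1 : Pr p {ω | X ω = x ∧ (fun _ : Ω => a) ω = a} = Pr p {ω | X ω = x} :=
      Pr_congr p fun ω => by simp
    have h2 : Pr p {ω | (fun _ : Ω => a) ω = a} = 1 := by
      rw [Pr_congr p (F := Set.univ) fun ω => by simp]
      exact Pr_univ hp1
    rw [h1, h2, mul_one]
    by_cases hx : 0 < Pr p {ω | X ω = x}
    · rw [div_self (ne_of_gt hx), Real.logb_one, mul_zero]
    · rw [le_antisymm (not_lt.mp hx) (Pr_nonneg hp _), zero_mul]
  · have h0 : Pr p {ω | X ω = x ∧ (fun _ : Ω => c0) ω = a} = 0 := by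
      rw [Pr_congr p (F := (∅ : Set Ω)) fun ω => by simp [ha, Ne.symm ha]]
      exact Pr_empty p
    rw [h0, zero_mul]

lemma susp_const (hp : ∀ ω, 0 ≤ p ω) (hp1 : ∑ ω, p ω = 1) (c0 : V) {b : ℝ}
    (hXL : ∀ x, 0 < Pr p {ω | X ω = x} →
      Pr p {ω | X ω = x ∧ L ω = false} = (1 - b) * Pr p {ω | X ω = x}) :
    susp p L (fun ω => (X ω, c0)) = -Real.logb 2 (1 - b) := by
  rw [susp_pair_eq p X (fun _ => c0) L]
  have main : ∀ x, ∑ a, Pr p {ω | X ω = x ∧ (fun _ : Ω => c0) ω = a} *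
      (-Real.logb 2 (Pr p {ω | X ω = x ∧ (fun _ : Ω => c0) ω = a ∧ L ω = false} /
        Pr p {ω | X ω = x ∧ (fun _ : Ω => c0) ω = a})) =
      Pr p {ω | X ω = x} * (-Real.logb 2 (1 - b)) := by
    intro x
    rw [Finset.sum_eq_single c0]
    · have h1 : Pr p {ω | X ω = x ∧ (fun _ : Ω => c0) ω = c0} = Pr p {ω | X ω = x} :=
        Pr_congr p fun ω => by simp
      have h2 : Pr p {ω | X ω = x ∧ (fun _ : Ω => c0) ω = c0 ∧ L ω = false} =
          Pr p {ω | X ω = x ∧ L ω = false} :=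
        Pr_congr p fun ω => by simp
      rw [h1, h2]
      by_cases hx : 0 < Pr p {ω | X ω = x}
      · rw [hXL x hx, mul_div_assoc, div_self (ne_of_gt hx), mul_one]
      · rw [le_antisymm (not_lt.mp hx) (Pr_nonneg hp _), zero_mul, zero_mul]
    · intro a _ ha
      have h0 : Pr p {ω | X ω = x ∧ (fun _ : Ω => c0) ω = a} = 0 := by
        rw [Pr_congr p (F := (∅ : Set Ω)) fun ω => by simp [Ne.symm ha]]
        exact Pr_empty p
      rw [h0, zero_mul]
    · intro h; exact absurd (Finset.mem_univ c0) h
  rw [Finset.sum_congr rfl fun x _ => main x, ← Finset.sum_mul, sum_PA p X hp1, one_mul]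

open Classical in
lemma leak_lb (hp : ∀ ω, 0 ≤ p ω) {c : ℝ}
    (hpost : ∀ t x, Pr p {ω | F ω = t ∧ X ω = x ∧ L ω = true} ≤
      c * Pr p {ω | F ω = t ∧ X ω = x}) (E : Set (V × S)) :
    (1 - c) * Pr p {ω | (F ω, X ω) ∈ E} ≤ Pr p {ω | (F ω, X ω) ∈ E ∧ L ω = false} := by
  rw [Pr_split p {ω | (F ω, X ω) ∈ E} (fun ω => (F ω, X ω)),
    Pr_split p {ω | (F ω, X ω) ∈ E ∧ L ω = false} (fun ω => (F ω, X ω)), Finset.mul_sum]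
  refine Finset.sum_le_sum fun y _ => ?_
  obtain ⟨t, x⟩ := y
  by_cases hy : (t, x) ∈ E
  · have h1 : Pr p ({ω | (F ω, X ω) ∈ E} ∩ {ω | (F ω, X ω) = (t, x)}) =
        Pr p {ω | F ω = t ∧ X ω = x} :=
      Pr_congr p fun ω => by
        simp only [Set.mem_inter_iff, Set.mem_setOf_eq, Prod.mk.injEq]
        constructor
        · rintro ⟨_, h2, h3⟩; exact ⟨h2, h3⟩
        · rintro ⟨h2, h3⟩
          refine ⟨?_, h2, h3⟩
          rw [h2, h3]; exact hy
    have h2 : Pr p ({ω | (F ω, X ω) ∈ E ∧ L ω = false} ∩ {ω | (F ω, X ω) = (t, x)}) =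
        Pr p {ω | F ω = t ∧ X ω = x ∧ L ω = false} :=
      Pr_congr p fun ω => by
        simp only [Set.mem_inter_iff, Set.mem_setOf_eq, Prod.mk.injEq]
        constructor
        · rintro ⟨⟨_, hL⟩, h2, h3⟩; exact ⟨h2, h3, hL⟩
        · rintro ⟨h2, h3, hL⟩
          refine ⟨⟨?_, hL⟩, h2, h3⟩
          rw [h2, h3]; exact hy
    rw [h1, h2]
    have hsplit := Pr_split_bool p {ω | F ω = t ∧ X ω = x} L
    have hc1 : Pr p ({ω | F ω = t ∧ X ω = x} ∩ {ω | L ω = false}) =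
        Pr p {ω | F ω = t ∧ X ω = x ∧ L ω = false} :=
      Pr_congr p fun ω => by
        simp only [Set.mem_inter_iff, Set.mem_setOf_eq]; tauto
    have hc2 : Pr p ({ω | F ω = t ∧ X ω = x} ∩ {ω | L ω = true}) =
        Pr p {ω | F ω = t ∧ X ω = x ∧ L ω = true} :=
      Pr_congr p fun ω => by
        simp only [Set.mem_inter_iff, Set.mem_setOf_eq]; tauto
    rw [hc1, hc2] at hsplit
    have := hpost t x
    linarith
  · have h1 : Pr p ({ω | (F ω, X ω) ∈ E} ∩ {ω | (F ω, X ω) = (t, x)}) = 0 := by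
      rw [Pr_congr p (F := (∅ : Set Ω)) fun ω => ?_, Pr_empty]
      simp only [Set.mem_inter_iff, Set.mem_setOf_eq, Set.mem_empty_iff_false, iff_false]
      rintro ⟨hE, hpair⟩
      exact hy (hpair ▸ hE)
    have h2 : Pr p ({ω | (F ω, X ω) ∈ E ∧ L ω = false} ∩ {ω | (F ω, X ω) = (t, x)}) = 0 := by
      rw [Pr_congr p (F := (∅ : Set Ω)) fun ω => ?_, Pr_empty]
      simp only [Set.mem_inter_iff, Set.mem_setOf_eq, Set.mem_empty_iff_false, iff_false]
      rintro ⟨⟨hE, _⟩, hpair⟩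
      exact hy (hpair ▸ hE)
    rw [h1, h2, mul_zero]

lemma susp_final (hp : ∀ ω, 0 ≤ p ω) (hp1 : ∑ ω, p ω = 1) {b c : ℝ}
    (hc0 : 0 < c) (hc1 : c < 1)
    (hpost : ∀ x t, (1 - c) * Pr p {ω | X ω = x ∧ F ω = t} ≤
      Pr p {ω | X ω = x ∧ F ω = t ∧ L ω = false})
    (hLf : Pr p {ω | L ω = false} = 1 - b) :
    susp p L (fun ω => (X ω, F ω)) ≤ b / c * (-Real.logb 2 (1 - c)) := by
  rw [susp_pair_eq p X F L]
  have key : ∀ x t, Pr p {ω | X ω = x ∧ F ω = t} *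
      (-Real.logb 2 (Pr p {ω | X ω = x ∧ F ω = t ∧ L ω = false} /
        Pr p {ω | X ω = x ∧ F ω = t})) ≤
      (Pr p {ω | X ω = x ∧ F ω = t} - Pr p {ω | X ω = x ∧ F ω = t ∧ L ω = false}) *
        ((-Real.logb 2 (1 - c)) / c) := by
    intro x t
    by_cases hP : 0 < Pr p {ω | X ω = x ∧ F ω = t}
    · set P := Pr p {ω | X ω = x ∧ F ω = t}
      set LP := Pr p {ω | X ω = x ∧ F ω = t ∧ L ω = false}
      have hq1 : 1 - c ≤ LP / P := by
        rw [le_div_iff₀ hP]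
        linarith [hpost x t]
      have hq2 : LP / P ≤ 1 := by
        rw [div_le_one hP]
        exact Pr_mono hp (Set.setOf_subset_setOf.mpr fun ω h => ⟨h.1, h.2.1⟩)
      have hch := chord_bound hc0 hc1 hq1 hq2
      have := mul_le_mul_of_nonneg_left hch (le_of_lt hP)
      refine this.trans_eq ?_
      rw [show P * ((1 - LP / P) / c * -Real.logb 2 (1 - c)) =
        (P * (1 - LP / P)) * (-Real.logb 2 (1 - c) / c) from by ring]
      rw [mul_sub, mul_one, mul_div_cancel₀ _ (ne_of_gt hP)]
    · have h0 : Pr p {ω | X ω = x ∧ F ω = t} = 0 :=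
        le_antisymm (not_lt.mp hP) (Pr_nonneg hp _)
      have h0' : Pr p {ω | X ω = x ∧ F ω = t ∧ L ω = false} = 0 :=
        le_antisymm (le_of_le_of_eq
          (Pr_mono hp (Set.setOf_subset_setOf.mpr fun ω h => ⟨h.1, h.2.1⟩)) h0)
          (Pr_nonneg hp _)
      simp [h0, h0']
  refine le_trans (Finset.sum_le_sum fun x _ => Finset.sum_le_sum fun t _ => key x t) ?_
  have sumP : ∑ x, ∑ t, Pr p {ω | X ω = x ∧ F ω = t} = 1 := by
    have inner : ∀ x, ∑ t, Pr p {ω | X ω = x ∧ F ω = t} = Pr p {ω | X ω = x} := by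
      intro x
      rw [Pr_split p {ω | X ω = x} F]
      exact Finset.sum_congr rfl fun t _ => Pr_congr p fun ω => by
        simp only [Set.mem_inter_iff, Set.mem_setOf_eq]
    rw [Finset.sum_congr rfl fun x _ => inner x, sum_PA p X hp1]
  have sumLP : ∑ x, ∑ t, Pr p {ω | X ω = x ∧ F ω = t ∧ L ω = false} = 1 - b := by
    have inner : ∀ x, ∑ t, Pr p {ω | X ω = x ∧ F ω = t ∧ L ω = false} =
        Pr p {ω | X ω = x ∧ L ω = false} := by
      intro x
      rw [Pr_split p {ω | X ω = x ∧ L ω = false} F]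
      exact Finset.sum_congr rfl fun t _ => Pr_congr p fun ω => by
        simp only [Set.mem_inter_iff, Set.mem_setOf_eq]; tauto
    rw [Finset.sum_congr rfl fun x _ => inner x]
    rw [← hLf, Pr_split p {ω | L ω = false} X]
    exact Finset.sum_congr rfl fun x _ => Pr_congr p fun ω => by
      simp only [Set.mem_inter_iff, Set.mem_setOf_eq]; tauto
  have expand : ∑ x, ∑ t,
      ((Pr p {ω | X ω = x ∧ F ω = t} - Pr p {ω | X ω = x ∧ F ω = t ∧ L ω = false}) *
        ((-Real.logb 2 (1 - c)) / c)) =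
      b * ((-Real.logb 2 (1 - c)) / c) := by
    have h1 : ∀ x : S, ∑ t,
        ((Pr p {ω | X ω = x ∧ F ω = t} - Pr p {ω | X ω = x ∧ F ω = t ∧ L ω = false}) *
          ((-Real.logb 2 (1 - c)) / c)) =
        (∑ t, (Pr p {ω | X ω = x ∧ F ω = t} -
          Pr p {ω | X ω = x ∧ F ω = t ∧ L ω = false})) * ((-Real.logb 2 (1 - c)) / c) :=
      fun x => (Finset.sum_mul _ _ _).symm
    rw [Finset.sum_congr rfl fun x _ => h1 x, ← Finset.sum_mul]
    have h2 : ∑ x, ∑ t, (Pr p {ω | X ω = x ∧ F ω = t} -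
        Pr p {ω | X ω = x ∧ F ω = t ∧ L ω = false}) = b := by
      simp only [Finset.sum_sub_distrib]
      rw [sumP, sumLP]; ring
    rw [h2]
  rw [expand]
  rw [show b * (-Real.logb 2 (1 - c) / c) = b / c * -Real.logb 2 (1 - c) from by ring]

end finals

/-- if each player leaks with prior probability `b` given `X`,
and the posterior probability of leaking stays `≤ c`, then
`I(X;T) ≤ n·(−b·log₂(1−c) + c·log₂(1−b))/c`. -/
theorem info_le_capacity_bound {Ω S M : Type*} [Fintype Ω] [Fintype S] [Fintype M]
    {n m : ℕ}
    (p : Ω → ℝ) (hp : ∀ ω, 0 ≤ p ω) (hp1 : ∑ ω, p ω = 1)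
    (X : Ω → S) (L : Fin n → Ω → Bool) (T : Fin m → Ω → M) (j : Fin m → Fin n)
    (b c : ℝ) (hb : 0 < b) (hbc : b ≤ c) (hc1 : c < 1)
    (hindep : ∀ (k : Fin m) (x : S) (a : M) (t : Fin m → M),
      0 < Pr p {ω | X ω = x ∧ (∀ i, i < k → T i ω = t i) ∧ L (j k) ω = false} →
      cPr p {ω | T k ω = a}
          {ω | X ω = x ∧ (∀ i, i < k → T i ω = t i) ∧ L (j k) ω = false} =
        cPr p {ω | T k ω = a}
          {ω | (∀ i, i < k → T i ω = t i) ∧ L (j k) ω = false})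
    (hprior : ∀ (i : Fin n) (x : S), 0 < Pr p {ω | X ω = x} →
      cPr p {ω | L i ω = true} {ω | X ω = x} = b)
    (hpost : ∀ (i : Fin n) (t : Fin m → M) (x : S),
      0 < Pr p {ω | (∀ k, T k ω = t k) ∧ X ω = x} →
      cPr p {ω | L i ω = true} {ω | (∀ k, T k ω = t k) ∧ X ω = x} ≤ c) :
    mutInfo p X (fun ω k => T k ω) ≤
      (n : ℝ) * ((-b * Real.logb 2 (1 - c) + c * Real.logb 2 (1 - b)) / c) := by
  classical
  have hc0 : 0 < c := lt_of_lt_of_le hb hbc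
  have hb1 : b < 1 := lt_of_le_of_lt hbc hc1
  have hRHS : (n : ℝ) * ((-b * Real.logb 2 (1 - c) + c * Real.logb 2 (1 - b)) / c) =
      (n : ℝ) * (b / c * (-Real.logb 2 (1 - c)) - -Real.logb 2 (1 - b)) := by
    field_simp
    ring
  rw [hRHS]
  have hbracket : 0 ≤ b / c * (-Real.logb 2 (1 - c)) - -Real.logb 2 (1 - b) := by
    have hch := chord_bound hc0 hc1 (t := 1 - b) (by linarith) (by linarith)
    have e : (1 - (1 - b)) / c = b / c := by ring
    rw [e] at hch
    linarith
  -- prior facts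
  have hpriorPr : ∀ (i : Fin n) (x : S), 0 < Pr p {ω | X ω = x} →
      Pr p {ω | X ω = x ∧ L i ω = false} = (1 - b) * Pr p {ω | X ω = x} := by
    intro i x hx
    have h := hprior i x hx
    unfold cPr at h
    rw [div_eq_iff (ne_of_gt hx)] at h
    have hsplit := Pr_split_bool p {ω | X ω = x} (L i)
    have hc1' : Pr p ({ω | X ω = x} ∩ {ω | L i ω = false}) =
        Pr p {ω | X ω = x ∧ L i ω = false} := Pr_congr p fun ω => by
      simp only [Set.mem_inter_iff, Set.mem_setOf_eq]
    have hc2' : Pr p ({ω | X ω = x} ∩ {ω | L i ω = true}) =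
        Pr p ({ω | L i ω = true} ∩ {ω | X ω = x}) := Pr_congr p fun ω => by
      simp only [Set.mem_inter_iff, Set.mem_setOf_eq]; tauto
    rw [hc1', hc2', h] at hsplit
    linarith
  have hLfPr : ∀ i : Fin n, Pr p {ω | L i ω = false} = 1 - b := by
    intro i
    rw [Pr_split p {ω | L i ω = false} X]
    have hterm : ∀ x : S, Pr p ({ω | L i ω = false} ∩ {ω | X ω = x}) =
        (1 - b) * Pr p {ω | X ω = x} := by
      intro x
      have hcg : Pr p ({ω | L i ω = false} ∩ {ω | X ω = x}) =
          Pr p {ω | X ω = x ∧ L i ω = false} := Pr_congr p fun ω => by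
        simp only [Set.mem_inter_iff, Set.mem_setOf_eq]; tauto
      rw [hcg]
      by_cases hx : 0 < Pr p {ω | X ω = x}
      · exact hpriorPr i x hx
      · have h0 : Pr p {ω | X ω = x} = 0 := le_antisymm (not_lt.mp hx) (Pr_nonneg hp _)
        have h0' : Pr p {ω | X ω = x ∧ L i ω = false} = 0 :=
          le_antisymm (le_of_le_of_eq
            (Pr_mono hp (Set.setOf_subset_setOf.mpr fun ω h => h.1)) h0)
            (Pr_nonneg hp _)
        rw [h0, h0', mul_zero]
    rw [Finset.sum_congr rfl fun x _ => hterm x, ← Finset.mul_sum, sum_PA p X hp1, mul_one]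
  rcases Nat.eq_zero_or_pos m with hm | hm
  · subst hm
    have hconst : (fun ω (k : Fin 0) => T k ω) = (fun _ : Ω => (fun k : Fin 0 => k.elim0)) :=
      funext fun ω => funext fun k => k.elim0
    rw [hconst, mutInfo_const p X hp hp1 _]
    exact mul_nonneg (Nat.cast_nonneg n) hbracket
  · -- main case m > 0
    have hΩ : Nonempty Ω := by
      by_contra h
      rw [not_nonempty_iff] at h
      rw [Finset.univ_eq_empty, Finset.sum_empty] at hp1
      norm_num at hp1
    obtain ⟨ω0⟩ := hΩ
    set d : M := T ⟨0, hm⟩ ω0 with hd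
    set F : Ω → (Fin m → M) := fun ω i => T i ω with hF
    set G : ℕ → (Fin m → M) → (Fin m → M) := fun k t i => if i.val < k then t i else d with hG
    have hFgoal : (fun ω (k : Fin m) => T k ω) = F := by rw [hF]
    have hGF : ∀ (k : ℕ) (a : Fin m → M) (ω : Ω),
        G k (F ω) = G k a ↔ ∀ i : Fin m, i.val < k → T i ω = a i := by
      intro k a ω
      constructor
      · intro h i hi
        have h2 := congrFun h i
        simpa [hG, hF, hi] using h2
      · intro h
        funext i
        by_cases hi : i.val < k
        · simp [hG, hF, hi, h i hi]
        · simp [hG, hi]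
    have hcompt : ∀ (k : ℕ) (ω : Ω), G k (G (k+1) (F ω)) = G k (F ω) := by
      intro k ω
      funext i
      by_cases hi : i.val < k
      · simp [hG, hF, hi, Nat.lt_succ_of_lt hi]
        exact fun h => absurd h (by omega)
      · simp [hG, hi]
    have hcomp : ∀ k : ℕ, (fun ω => G k (G (k+1) (F ω))) = fun ω => G k (F ω) :=
      fun k => funext fun ω => hcompt k ω
    have hGmpt : ∀ ω : Ω, G m (F ω) = F ω := by
      intro ω
      funext i
      simp [hG, i.isLt]
    have hG0 : ∀ ω : Ω, G 0 (F ω) = fun _ : Fin m => d := by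
      intro ω
      funext i
      simp [hG]
    -- posterior bound in Pr form on full transcripts
    have hpostPr : ∀ (i : Fin n) (t : Fin m → M) (x : S),
        Pr p {ω | F ω = t ∧ X ω = x ∧ L i ω = true} ≤
          c * Pr p {ω | F ω = t ∧ X ω = x} := by
      intro i t x
      have hFt : ∀ ω : Ω, F ω = t ↔ ∀ k, T k ω = t k := fun ω => by
        rw [hF]; exact funext_iff
      have hcg : Pr p {ω | F ω = t ∧ X ω = x} =
          Pr p {ω | (∀ k, T k ω = t k) ∧ X ω = x} := Pr_congr p fun ω => by
        simp only [Set.mem_setOf_eq, hFt ω]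
      by_cases hpos : 0 < Pr p {ω | (∀ k, T k ω = t k) ∧ X ω = x}
      · have h := hpost i t x hpos
        unfold cPr at h
        rw [div_le_iff₀ hpos] at h
        have hcg2 : Pr p {ω | F ω = t ∧ X ω = x ∧ L i ω = true} =
            Pr p ({ω | L i ω = true} ∩ {ω | (∀ k, T k ω = t k) ∧ X ω = x}) :=
          Pr_congr p fun ω => by
            simp only [Set.mem_setOf_eq, Set.mem_inter_iff, hFt ω]; tauto
        rw [hcg2, hcg]
        exact h
      · have h0 : Pr p {ω | (∀ k, T k ω = t k) ∧ X ω = x} = 0 :=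
          le_antisymm (not_lt.mp hpos) (Pr_nonneg hp _)
        have h1 : Pr p {ω | F ω = t ∧ X ω = x ∧ L i ω = true} ≤ 0 := by
          refine le_of_le_of_eq (Pr_mono hp ?_) h0
          refine Set.setOf_subset_setOf.mpr fun ω h => ⟨(hFt ω).mp h.1, h.2.1⟩
        rw [hcg, h0, mul_zero]
        exact h1
    have hleak : ∀ (i : Fin n) (E : Set ((Fin m → M) × S)),
        (1 - c) * Pr p {ω | (F ω, X ω) ∈ E} ≤
          Pr p {ω | (F ω, X ω) ∈ E ∧ L i ω = false} :=
      fun i E => leak_lb p X F (L i) hp (hpostPr i) E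
    -- positivity of leak-free events
    have hXAL : ∀ (i : Fin n) (kk : ℕ) (x : S) (a : Fin m → M),
        0 < Pr p {ω | X ω = x ∧ G kk (F ω) = a} →
        0 < Pr p {ω | X ω = x ∧ G kk (F ω) = a ∧ L i ω = false} := by
      intro i kk x a hpos
      have h := hleak i {ts : (Fin m → M) × S | G kk ts.1 = a ∧ ts.2 = x}
      have e1 : Pr p {ω | (F ω, X ω) ∈
          {ts : (Fin m → M) × S | G kk ts.1 = a ∧ ts.2 = x}} =
          Pr p {ω | X ω = x ∧ G kk (F ω) = a} := Pr_congr p fun ω => by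
        simp only [Set.mem_setOf_eq]; tauto
      have e2 : Pr p {ω | (F ω, X ω) ∈
          {ts : (Fin m → M) × S | G kk ts.1 = a ∧ ts.2 = x} ∧ L i ω = false} =
          Pr p {ω | X ω = x ∧ G kk (F ω) = a ∧ L i ω = false} := Pr_congr p fun ω => by
        simp only [Set.mem_setOf_eq]; tauto
      rw [e1, e2] at h
      have hc' : 0 < (1 - c) * Pr p {ω | X ω = x ∧ G kk (F ω) = a} :=
        mul_pos (by linarith) hpos
      linarith
    -- independence, cross-multiplied
    have hind : ∀ (k : ℕ) (hk : k < m) (x : S) (a : Fin m → M),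
        0 < Pr p {ω | X ω = x ∧ G k (G (k+1) (F ω)) = G k a ∧ L (j ⟨k, hk⟩) ω = false} →
        Pr p {ω | X ω = x ∧ G (k+1) (F ω) = a ∧ L (j ⟨k, hk⟩) ω = false} *
          Pr p {ω | G k (G (k+1) (F ω)) = G k a ∧ L (j ⟨k, hk⟩) ω = false} =
        Pr p {ω | G (k+1) (F ω) = a ∧ L (j ⟨k, hk⟩) ω = false} *
          Pr p {ω | X ω = x ∧ G k (G (k+1) (F ω)) = G k a ∧ L (j ⟨k, hk⟩) ω = false} := by
      intro k hk x a hpos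
      have hz : ∀ ω : Ω, (G k (G (k+1) (F ω)) = G k a) ↔
          (∀ i : Fin m, i < (⟨k, hk⟩ : Fin m) → T i ω = a i) := by
        intro ω
        rw [hcompt k ω, hGF k a ω]
        constructor
        · intro h i hi; exact h i (by simpa [Fin.lt_def] using hi)
        · intro h i hi; exact h i (by simpa [Fin.lt_def] using hi)
      by_cases hgood : ∀ i : Fin m, ¬ i.val < k + 1 → a i = d
      · have hA : ∀ ω : Ω, (G (k+1) (F ω) = a) ↔
            ((∀ i : Fin m, i < (⟨k, hk⟩ : Fin m) → T i ω = a i) ∧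
              T ⟨k, hk⟩ ω = a ⟨k, hk⟩) := by
          intro ω
          constructor
          · intro h
            constructor
            · intro i hi
              have hik : i.val < k := by simpa [Fin.lt_def] using hi
              have h2 := congrFun h i
              simpa [hG, hF, Nat.lt_succ_of_lt hik] using h2
            · have h2 := congrFun h ⟨k, hk⟩
              simpa [hG, hF, Nat.lt_succ_self] using h2
          · rintro ⟨h1, h2⟩
            simp only [hG, hF]
            funext i
            by_cases hi : i.val < k + 1
            · rw [if_pos hi]
              rcases Nat.lt_succ_iff_lt_or_eq.mp hi with hlt | heq
              · exact h1 i (by simpa [Fin.lt_def] using hlt)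
              · have hieq : i = ⟨k, hk⟩ := Fin.ext heq
                rw [hieq]; exact h2
            · rw [if_neg hi]; exact (hgood i hi).symm
        have cgD1 : Pr p {ω | X ω = x ∧ G k (G (k+1) (F ω)) = G k a ∧
            L (j ⟨k, hk⟩) ω = false} =
            Pr p {ω | X ω = x ∧ (∀ i, i < (⟨k, hk⟩ : Fin m) → T i ω = a i) ∧
              L (j ⟨k, hk⟩) ω = false} := Pr_congr p fun ω => by
          simp only [Set.mem_setOf_eq, hz ω]
        have cgD2 : Pr p {ω | G k (G (k+1) (F ω)) = G k a ∧ L (j ⟨k, hk⟩) ω = false} =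
            Pr p {ω | (∀ i, i < (⟨k, hk⟩ : Fin m) → T i ω = a i) ∧
              L (j ⟨k, hk⟩) ω = false} := Pr_congr p fun ω => by
          simp only [Set.mem_setOf_eq, hz ω]
        have cgN1 : Pr p {ω | X ω = x ∧ G (k+1) (F ω) = a ∧ L (j ⟨k, hk⟩) ω = false} =
            Pr p ({ω | T ⟨k, hk⟩ ω = a ⟨k, hk⟩} ∩
              {ω | X ω = x ∧ (∀ i, i < (⟨k, hk⟩ : Fin m) → T i ω = a i) ∧
                L (j ⟨k, hk⟩) ω = false}) := Pr_congr p fun ω => by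
          simp only [Set.mem_setOf_eq, Set.mem_inter_iff, hA ω]; tauto
        have cgN2 : Pr p {ω | G (k+1) (F ω) = a ∧ L (j ⟨k, hk⟩) ω = false} =
            Pr p ({ω | T ⟨k, hk⟩ ω = a ⟨k, hk⟩} ∩
              {ω | (∀ i, i < (⟨k, hk⟩ : Fin m) → T i ω = a i) ∧
                L (j ⟨k, hk⟩) ω = false}) := Pr_congr p fun ω => by
          simp only [Set.mem_setOf_eq, Set.mem_inter_iff, hA ω]; tauto
        rw [cgD1] at hpos
        have hD2pos : 0 < Pr p {ω | (∀ i, i < (⟨k, hk⟩ : Fin m) → T i ω = a i) ∧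
            L (j ⟨k, hk⟩) ω = false} := by
          refine hpos.trans_le (Pr_mono hp ?_)
          exact Set.setOf_subset_setOf.mpr fun ω h => ⟨h.2.1, h.2.2⟩
        have hi := hindep ⟨k, hk⟩ x (a ⟨k, hk⟩) a hpos
        unfold cPr at hi
        rw [div_eq_div_iff (ne_of_gt hpos) (ne_of_gt hD2pos)] at hi
        rw [cgD1, cgD2, cgN1, cgN2]
        exact hi
      · push_neg at hgood
        obtain ⟨i1, hi1, hne⟩ := hgood
        have hbad : ∀ ω : Ω, ¬ (G (k+1) (F ω) = a) := by
          intro ω h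
          have h2 := congrFun h i1
          have hi1' : ¬ (i1 : ℕ) < k + 1 := not_lt.mpr hi1
          simp only [hG] at h2
          rw [if_neg hi1'] at h2
          exact hne h2.symm
        have hz1 : Pr p {ω | X ω = x ∧ G (k+1) (F ω) = a ∧ L (j ⟨k, hk⟩) ω = false} = 0 := by
          rw [Pr_congr p (F := (∅ : Set Ω)) fun ω => ?_, Pr_empty]
          simp only [Set.mem_setOf_eq, Set.mem_empty_iff_false, iff_false]
          rintro ⟨_, hGa, _⟩
          exact hbad ω hGa
        have hz2 : Pr p {ω | G (k+1) (F ω) = a ∧ L (j ⟨k, hk⟩) ω = false} = 0 := by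
          rw [Pr_congr p (F := (∅ : Set Ω)) fun ω => ?_, Pr_empty]
          simp only [Set.mem_setOf_eq, Set.mem_empty_iff_false, iff_false]
          rintro ⟨hGa, _⟩
          exact hbad ω hGa
        rw [hz1, hz2, zero_mul, zero_mul]
    -- per-step bounds
    have hstep : ∀ (k : ℕ) (hk : k < m),
        mutInfo p X (fun ω => G (k+1) (F ω)) - mutInfo p X (fun ω => G k (F ω)) ≤
          susp p (L (j ⟨k, hk⟩)) (fun ω => (X ω, G (k+1) (F ω))) -
            susp p (L (j ⟨k, hk⟩)) (fun ω => (X ω, G k (F ω))) := by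
      intro k hk
      have h : mutInfo p X (fun ω => G (k+1) (F ω)) -
          mutInfo p X (fun ω => G k (G (k+1) (F ω))) ≤
            susp p (L (j ⟨k, hk⟩)) (fun ω => (X ω, G (k+1) (F ω))) -
              susp p (L (j ⟨k, hk⟩)) (fun ω => (X ω, G k (G (k+1) (F ω)))) :=
        speaker_step p X (fun ω => G (k+1) (F ω)) (G k) (L (j ⟨k, hk⟩)) hp hp1
          (hXAL (j ⟨k, hk⟩) (k+1)) (hind k hk)
      have e : (fun ω => (X ω, G k (G (k+1) (F ω)))) = fun ω => (X ω, G k (F ω)) :=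
        funext fun ω => by rw [hcompt k ω]
      rw [hcomp k, e] at h
      exact h
    have hmono : ∀ (i : Fin n) (k : ℕ),
        susp p (L i) (fun ω => (X ω, G k (F ω))) ≤
          susp p (L i) (fun ω => (X ω, G (k+1) (F ω))) := by
      intro i k
      have h : susp p (L i) (fun ω => (X ω, G k (G (k+1) (F ω)))) ≤
          susp p (L i) (fun ω => (X ω, G (k+1) (F ω))) :=
        susp_mono_step p X (fun ω => G (k+1) (F ω)) (G k) (L i) hp (hXAL i (k+1))
      have e : (fun ω => (X ω, G k (G (k+1) (F ω)))) = fun ω => (X ω, G k (F ω)) :=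
        funext fun ω => by rw [hcompt k ω]
      rw [e] at h
      exact h
    -- endpoints
    have hm0 : mutInfo p X (fun ω => G 0 (F ω)) = 0 := by
      have e : (fun ω => G 0 (F ω)) = fun _ : Ω => (fun _ : Fin m => d) :=
        funext fun ω => hG0 ω
      rw [e]
      exact mutInfo_const p X hp hp1 _
    have hs0 : ∀ i : Fin n, susp p (L i) (fun ω => (X ω, G 0 (F ω))) =
        -Real.logb 2 (1 - b) := by
      intro i
      have e : (fun ω => (X ω, G 0 (F ω))) = fun ω => (X ω, (fun _ : Fin m => d)) :=
        funext fun ω => by rw [hG0 ω]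
      rw [e]
      exact susp_const p X (L i) hp hp1 _ (hpriorPr i)
    have hsfin : ∀ i : Fin n, susp p (L i) (fun ω => (X ω, G m (F ω))) ≤
        b / c * (-Real.logb 2 (1 - c)) := by
      intro i
      have e : (fun ω => (X ω, G m (F ω))) = fun ω => (X ω, F ω) :=
        funext fun ω => by rw [hGmpt ω]
      rw [e]
      refine susp_final p X F (L i) hp hp1 hc0 hc1 ?_ (hLfPr i)
      intro x t
      have h := hleak i {ts : (Fin m → M) × S | ts.1 = t ∧ ts.2 = x}
      have e1 : Pr p {ω | (F ω, X ω) ∈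
          {ts : (Fin m → M) × S | ts.1 = t ∧ ts.2 = x}} =
          Pr p {ω | X ω = x ∧ F ω = t} := Pr_congr p fun ω => by
        simp only [Set.mem_setOf_eq]; tauto
      have e2 : Pr p {ω | (F ω, X ω) ∈
          {ts : (Fin m → M) × S | ts.1 = t ∧ ts.2 = x} ∧ L i ω = false} =
          Pr p {ω | X ω = x ∧ F ω = t ∧ L i ω = false} := Pr_congr p fun ω => by
        simp only [Set.mem_setOf_eq]; tauto
      rw [e1, e2] at h
      exact h
    -- telescoping
    have hGmfun : (fun ω => G m (F ω)) = F := funext fun ω => hGmpt ω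
    calc mutInfo p X F
        = mutInfo p X (fun ω => G m (F ω)) - mutInfo p X (fun ω => G 0 (F ω)) := by
          rw [hGmfun, hm0, sub_zero]
      _ = ∑ k ∈ Finset.range m, (mutInfo p X (fun ω => G (k+1) (F ω)) -
            mutInfo p X (fun ω => G k (F ω))) :=
          (Finset.sum_range_sub (fun k => mutInfo p X (fun ω => G k (F ω))) m).symm
      _ ≤ ∑ k ∈ Finset.range m, ∑ i : Fin n,
            (susp p (L i) (fun ω => (X ω, G (k+1) (F ω))) -
              susp p (L i) (fun ω => (X ω, G k (F ω)))) := by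
          refine Finset.sum_le_sum fun k hk => ?_
          have hk' := Finset.mem_range.mp hk
          refine le_trans (hstep k hk') ?_
          exact Finset.single_le_sum
            (f := fun i : Fin n => susp p (L i) (fun ω => (X ω, G (k+1) (F ω))) -
              susp p (L i) (fun ω => (X ω, G k (F ω))))
            (fun i _ => sub_nonneg.mpr (hmono i k)) (Finset.mem_univ _)
      _ = ∑ i : Fin n, ∑ k ∈ Finset.range m,
            (susp p (L i) (fun ω => (X ω, G (k+1) (F ω))) -
              susp p (L i) (fun ω => (X ω, G k (F ω)))) := Finset.sum_comm
      _ = ∑ i : Fin n, (susp p (L i) (fun ω => (X ω, G m (F ω))) -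
            susp p (L i) (fun ω => (X ω, G 0 (F ω)))) :=
          Finset.sum_congr rfl fun i _ =>
            Finset.sum_range_sub (fun k => susp p (L i) (fun ω => (X ω, G k (F ω)))) m
      _ ≤ ∑ i : Fin n, (b / c * (-Real.logb 2 (1 - c)) - -Real.logb 2 (1 - b)) := by
          refine Finset.sum_le_sum fun i _ => ?_
          rw [hs0 i]
          exact sub_le_sub_right (hsfin i) _
      _ = (n : ℝ) * (b / c * (-Real.logb 2 (1 - c)) - -Real.logb 2 (1 - b)) := by
          rw [Finset.sum_const, Finset.card_univ, Fintype.card_fin, nsmul_eq_mul]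
end

section
/- Let a, d be positive integers with 0 < a < d and let 0 < b < c < 1 satisfy a/d = b(1−c)/(c(1−b)). Let X be uniformly distributed on {1,…,d}, let L be {0,1}-valued with Pr(L=1)=b and independent of X, and let the message A be distributed as follows: given L=0, A is uniform on {1,…,d} and independent of X; given L=1 and X=x, A is uniform on the set {1+(x−1)a, 2+(x−1)a, …, xa} reduced modulo d into {1,…,d}. Then I(A;X) = (−b·log(1−c) + c·log(1−b))/c. -/
open Finset

lemma fiber_card (a d : ℕ) [NeZero d] (ha : 0 < a) (had : a < d) (τ : ZMod d) :
    (univ.filter (fun q : ZMod d × Fin a =>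
      (a : ZMod d) * q.1 + ((q.2 : ℕ) : ZMod d) = τ)).card = a := by
  classical
  set F : ZMod d → Finset (ZMod d × Fin a) := fun τ =>
    univ.filter (fun q : ZMod d × Fin a =>
      (a : ZMod d) * q.1 + ((q.2 : ℕ) : ZMod d) = τ) with hF
  have step : ∀ σ : ZMod d, (F σ).card = (F (σ + 1)).card := by
    intro σ
    refine Finset.card_bij'
      (fun q (_ : q ∈ F σ) =>
        if h : (q.2 : ℕ) + 1 < a then (q.1, (⟨(q.2 : ℕ) + 1, h⟩ : Fin a))
        else (q.1 + 1, (⟨0, ha⟩ : Fin a)))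
      (fun q (_ : q ∈ F (σ + 1)) =>
        if h : 0 < (q.2 : ℕ) then (q.1, (⟨(q.2 : ℕ) - 1, by omega⟩ : Fin a))
        else (q.1 - 1, (⟨a - 1, by omega⟩ : Fin a))) ?_ ?_ ?_ ?_
    · rintro ⟨x, j⟩ hq
      simp only [hF, mem_filter, mem_univ, true_and] at hq ⊢
      by_cases h : (j : ℕ) + 1 < a
      · simp only [dif_pos h]
        push_cast
        linear_combination hq
      · simp only [dif_neg h]
        have hj : (j : ℕ) = a - 1 := by omega
        have hcast : ((a - 1 : ℕ) : ZMod d) = (a : ZMod d) - 1 := by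
          push_cast [Nat.cast_sub ha]; ring
        rw [← hq, hj, hcast]
        push_cast
        ring
    · rintro ⟨y, k⟩ hq
      simp only [hF, mem_filter, mem_univ, true_and] at hq ⊢
      by_cases h : 0 < (k : ℕ)
      · simp only [dif_pos h]
        have hcast : (((k : ℕ) - 1 : ℕ) : ZMod d) = ((k : ℕ) : ZMod d) - 1 := by
          push_cast [Nat.cast_sub h]; ring
        rw [hcast]
        linear_combination hq
      · simp only [dif_neg h]
        have hk : (((k : ℕ) : ℕ) : ZMod d) = 0 := by
          have h0 : (k : ℕ) = 0 := by omega
          simp [h0]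
        have hcast : ((a - 1 : ℕ) : ZMod d) = (a : ZMod d) - 1 := by
          push_cast [Nat.cast_sub ha]; ring
        rw [hcast]
        linear_combination hq - hk
    · rintro ⟨x, j⟩ hq
      dsimp only
      by_cases h : (j : ℕ) + 1 < a
      · simp only [dif_pos h]
        have : (0 : ℕ) < (j : ℕ) + 1 := by omega
        simp only [dif_pos this]
        simp
      · simp only [dif_neg h]
        rw [dif_neg (by simp)]
        have hj : (j : ℕ) = a - 1 := by omega
        refine Prod.ext ?_ ?_
        · dsimp only; ring
        · dsimp only; exact Fin.ext (by simp [hj])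
    · rintro ⟨y, k⟩ hq
      dsimp only
      by_cases h : 0 < (k : ℕ)
      · simp only [dif_pos h]
        have : (k : ℕ) - 1 + 1 < a := by have := k.isLt; omega
        simp only [dif_pos this]
        refine Prod.ext rfl ?_
        · dsimp only; exact Fin.ext (by simp; omega)
      · simp only [dif_neg h]
        have : ¬ (a - 1 + 1 < a) := by omega
        simp only [dif_neg this]
        refine Prod.ext ?_ ?_
        · dsimp only; ring
        · dsimp only
          exact Fin.ext (by simp; omega)
  have hconst : ∀ σ : ZMod d, (F σ).card = (F 0).card := by
    have hn : ∀ n : ℕ, (F (n : ZMod d)).card = (F 0).card := by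
      intro n
      induction n with
      | zero => simp
      | succ n ih => rw [← ih]; push_cast; exact (step _).symm
    intro σ
    have : ((σ.val : ℕ) : ZMod d) = σ := ZMod.natCast_rightInverse σ
    calc (F σ).card = (F ((σ.val : ℕ) : ZMod d)).card := by rw [this]
    _ = (F 0).card := hn _
  have htotal : d * (F 0).card = d * a := by
    have h1 : (univ : Finset (ZMod d × Fin a)).card
        = ∑ σ : ZMod d, (F σ).card := by
      apply Finset.card_eq_sum_card_fiberwise
        (f := fun q : ZMod d × Fin a => (a : ZMod d) * q.1 + ((q.2 : ℕ) : ZMod d))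
      intro x _; exact mem_univ _
    rw [Finset.sum_congr rfl (fun σ _ => hconst σ), Finset.sum_const] at h1
    have h2 : (univ : Finset (ZMod d × Fin a)).card = d * a := by
      simp [Finset.card_univ, ZMod.card]
    have h3 : (univ : Finset (ZMod d)).card = d := by
      simp [Finset.card_univ, ZMod.card]
    rw [h2, h3, smul_eq_mul] at h1
    omega
  have : (F 0).card = a := by
    have hd : 0 < d := lt_trans ha had
    exact Nat.eq_of_mul_eq_mul_left hd htotal
  rw [show (univ.filter fun q : ZMod d × Fin a =>
      (a : ZMod d) * q.1 + ((q.2 : ℕ) : ZMod d) = τ) = F τ from rfl, hconst τ, this]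

lemma count_S (a d : ℕ) (ha : 0 < a) (had : a < d) (t : Fin d) :
    (univ.filter (fun x : Fin d => ∃ j < a, (t : ℕ) = ((x : ℕ) * a + j) % d)).card = a := by
  classical
  haveI : NeZero d := ⟨by omega⟩
  have hτ : True := trivial
  -- predicate equivalence
  have hiff : ∀ x : Fin d, (∃ j < a, (t : ℕ) = ((x : ℕ) * a + j) % d) ↔
      (∃ j < a, (a : ZMod d) * (((x : ℕ) : ZMod d)) + ((j : ℕ) : ZMod d) = ((t : ℕ) : ZMod d)) := by
    intro x
    constructor
    · rintro ⟨j, hj, hjt⟩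
      refine ⟨j, hj, ?_⟩
      rw [hjt]
      push_cast [ZMod.natCast_mod]
      ring
    · rintro ⟨j, hj, hjt⟩
      refine ⟨j, hj, ?_⟩
      have hcast : ((t : ℕ) : ZMod d) = ((((x : ℕ) * a + j) : ℕ) : ZMod d) := by
        push_cast
        linear_combination -hjt
      have hm := (ZMod.natCast_eq_natCast_iff _ _ _).mp hcast
      have hmod : (t : ℕ) % d = ((x : ℕ) * a + j) % d := hm
      rwa [Nat.mod_eq_of_lt t.isLt] at hmod
  -- the ZMod-level set
  set G : Finset (ZMod d) := univ.filter
    (fun y : ZMod d => ∃ j < a, (a : ZMod d) * y + ((j : ℕ) : ZMod d) = ((t : ℕ) : ZMod d)) with hG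
  have hfd : (univ.filter (fun x : Fin d => ∃ j < a, (t : ℕ) = ((x : ℕ) * a + j) % d)).card
      = G.card := by
    refine Finset.card_bij (fun x _ => (((x : ℕ) : ZMod d))) ?_ ?_ ?_
    · intro x hx
      rw [mem_filter] at hx
      rw [hG, mem_filter]
      exact ⟨mem_univ _, (hiff x).mp hx.2⟩
    · intro x₁ h₁ x₂ h₂ heq
      have h : ((x₁ : ℕ) : ZMod d) = ((x₂ : ℕ) : ZMod d) := heq
      have h2 := congrArg ZMod.val h
      rw [ZMod.val_cast_of_lt x₁.isLt, ZMod.val_cast_of_lt x₂.isLt] at h2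
      exact Fin.ext h2
    · intro y hy
      refine ⟨⟨y.val, y.val_lt⟩, ?_, ?_⟩
      · rw [mem_filter]
        refine ⟨mem_univ _, (hiff _).mpr ?_⟩
        rw [hG, mem_filter] at hy
        simpa [ZMod.natCast_rightInverse y] using hy.2
      · simpa using ZMod.natCast_rightInverse y
  -- G.card = a via the fiber
  set Fib : Finset (ZMod d × Fin a) := univ.filter (fun q : ZMod d × Fin a =>
      (a : ZMod d) * q.1 + ((q.2 : ℕ) : ZMod d) = ((t : ℕ) : ZMod d)) with hFib
  have hinj : Set.InjOn Prod.fst (Fib : Set (ZMod d × Fin a)) := by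
    rintro ⟨x, j⟩ hx ⟨x', j'⟩ hx' (heq : x = x')
    rw [hFib] at hx hx'
    simp only [coe_filter, Set.mem_setOf_eq, mem_univ, true_and] at hx hx'
    subst heq
    have hjj : ((j : ℕ) : ZMod d) = ((j' : ℕ) : ZMod d) := by
      have h3 := hx.trans hx'.symm
      exact add_left_cancel h3
    have := congrArg ZMod.val hjj
    rw [ZMod.val_cast_of_lt (lt_trans j.isLt had), ZMod.val_cast_of_lt (lt_trans j'.isLt had)] at this
    exact Prod.ext rfl (Fin.ext this)
  have himg : Fib.image Prod.fst = G := by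
    ext y
    simp only [hFib, hG, mem_image, mem_filter, mem_univ, true_and]
    constructor
    · rintro ⟨⟨x, j⟩, hx, rfl⟩
      exact ⟨(j : ℕ), j.isLt, hx⟩
    · rintro ⟨j, hj, hjy⟩
      exact ⟨(y, ⟨j, hj⟩), hjy, rfl⟩
  have : G.card = Fib.card := by
    rw [← himg, Finset.card_image_of_injOn hinj]
  rw [hfd, this, hFib]
  exact fiber_card a d ha had _

lemma count_T (a d : ℕ) (ha : 0 < a) (had : a < d) (x : Fin d) :
    (univ.filter (fun t : Fin d => ∃ j < a, (t : ℕ) = ((x : ℕ) * a + j) % d)).card = a := by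
  classical
  have hd : 0 < d := lt_trans ha had
  have himg : univ.filter (fun t : Fin d => ∃ j < a, (t : ℕ) = ((x : ℕ) * a + j) % d)
      = (univ : Finset (Fin a)).image
        (fun j : Fin a => (⟨((x : ℕ) * a + (j : ℕ)) % d, Nat.mod_lt _ hd⟩ : Fin d)) := by
    ext t
    simp only [mem_filter, mem_univ, true_and, mem_image]
    constructor
    · rintro ⟨j, hj, hjt⟩
      exact ⟨⟨j, hj⟩, by apply Fin.ext; simp [hjt]⟩
    · rintro ⟨j, rfl⟩
      exact ⟨(j : ℕ), j.isLt, rfl⟩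
  rw [himg, Finset.card_image_of_injOn, Finset.card_univ, Fintype.card_fin]
  intro j _ j' _ heq
  have h1 : ((x : ℕ) * a + (j : ℕ)) % d = ((x : ℕ) * a + (j' : ℕ)) % d := by
    simpa [Fin.ext_iff] using heq
  have h2 : (j : ℕ) % d = (j' : ℕ) % d := by
    have := Nat.ModEq.add_left_cancel' ((x : ℕ) * a) (h1 : _ ≡ _ [MOD d])
    exact this
  rw [Nat.mod_eq_of_lt (lt_trans j.isLt had), Nat.mod_eq_of_lt (lt_trans j'.isLt had)] at h2
  exact Fin.ext h2

lemma div_div_inv_cancel (x y : ℝ) (hy : y ≠ 0) : x / y / y⁻¹ = x := by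
  field_simp

/-- Example: achieving the bound. With `X` uniform on `{1,…,d}`
(encoded as `Fin d`, where `x : Fin d` stands for the value `x+1`), `L`
independent of `X` with `Pr(L=1)=b`, `A` uniform on `{1,…,d}` given `L=0`
(independent of `X`), and `A` uniform on
`S_x = {1+(x−1)a, …, xa} mod d` given `L=1, X=x`
(in the 0-based encoding, `t ∈ S_x ↔ ∃ j < a, t = (x·a+j) % d`),
one has `I(A;X) = (−b·log₂(1−c) + c·log₂(1−b))/c`. -/
theorem example_mutInfo_eq {Ω : Type*} [Fintype Ω]
    (a d : ℕ) (ha : 0 < a) (had : a < d)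
    (b c : ℝ) (hb : 0 < b) (hbc : b < c) (hc : c < 1)
    (hratio : (a : ℝ) / d = b * (1 - c) / (c * (1 - b)))
    (p : Ω → ℝ) (hp : ∀ ω, 0 ≤ p ω) (hp1 : ∑ ω, p ω = 1)
    (X A : Ω → Fin d) (L : Ω → Bool)
    (hXunif : ∀ x, Pr p {ω | X ω = x} = (d : ℝ)⁻¹)
    (hL : Pr p {ω | L ω = true} = b)
    (hXL : ∀ x, Pr p {ω | X ω = x ∧ L ω = true} = Pr p {ω | X ω = x} * b)
    (hA0 : ∀ (x t : Fin d),
      Pr p {ω | X ω = x ∧ L ω = false ∧ A ω = t} =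
        Pr p {ω | X ω = x ∧ L ω = false} * (d : ℝ)⁻¹)
    (hA1in : ∀ (x t : Fin d), (∃ j < a, (t : ℕ) = ((x : ℕ) * a + j) % d) →
      Pr p {ω | X ω = x ∧ L ω = true ∧ A ω = t} =
        Pr p {ω | X ω = x ∧ L ω = true} * (a : ℝ)⁻¹)
    (hA1out : ∀ (x t : Fin d), ¬(∃ j < a, (t : ℕ) = ((x : ℕ) * a + j) % d) →
      Pr p {ω | X ω = x ∧ L ω = true ∧ A ω = t} = 0) :
    mutInfo p A X = (-b * Real.logb 2 (1 - c) + c * Real.logb 2 (1 - b)) / c := by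
  classical
  have hd : 0 < d := lt_trans ha had
  have hd0 : (d : ℝ) ≠ 0 := Nat.cast_ne_zero.mpr hd.ne'
  have ha0 : (a : ℝ) ≠ 0 := Nat.cast_ne_zero.mpr ha.ne'
  have hc0 : c ≠ 0 := by linarith
  have hb1 : (1 : ℝ) - b ≠ 0 := by nlinarith
  have hc1 : (1 : ℝ) - c ≠ 0 := by nlinarith
  -- split over L
  have hsplit : ∀ (P : Ω → Prop),
      Pr p {ω | P ω} = Pr p {ω | P ω ∧ L ω = true} + Pr p {ω | P ω ∧ L ω = false} := by
    intro P
    unfold Pr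
    rw [← Finset.sum_add_distrib]
    refine Finset.sum_congr rfl fun ω _ => ?_
    simp only [Set.indicator_apply, Set.mem_setOf_eq]
    by_cases hP : P ω
    · by_cases hL' : L ω = true
      · simp [hP, hL']
      · rw [Bool.not_eq_true] at hL'
        simp [hP, hL']
    · simp [hP]
  -- sum over X values
  have hsum : ∀ (P : Ω → Prop),
      Pr p {ω | P ω} = ∑ x : Fin d, Pr p {ω | X ω = x ∧ P ω} := by
    intro P
    unfold Pr
    rw [Finset.sum_comm]
    refine Finset.sum_congr rfl fun ω _ => ?_
    simp only [Set.indicator_apply, Set.mem_setOf_eq]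
    by_cases hP : P ω <;> simp [hP]
  have hX1 : ∀ x, Pr p {ω | X ω = x ∧ L ω = true} = b / d := by
    intro x; rw [hXL x, hXunif x]; ring
  have hX0 : ∀ x, Pr p {ω | X ω = x ∧ L ω = false} = (1 - b) / d := by
    intro x
    have h := hsplit (fun ω => X ω = x)
    rw [hXunif x, hX1 x] at h
    field_simp at h ⊢
    linarith
  -- joint distribution
  have hjoint : ∀ x s : Fin d, Pr p {ω | A ω = s ∧ X ω = x} =
      if ∃ j < a, (s : ℕ) = ((x : ℕ) * a + j) % d
        then (1 - b) / d ^ 2 + b / (d * a) else (1 - b) / d ^ 2 := by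
    intro x s
    have hset : {ω | A ω = s ∧ X ω = x} = {ω | X ω = x ∧ A ω = s} := by
      ext ω; simp only [Set.mem_setOf_eq]; tauto
    have h := hsplit (fun ω => X ω = x ∧ A ω = s)
    have hset1 : {ω | (X ω = x ∧ A ω = s) ∧ L ω = true} = {ω | X ω = x ∧ L ω = true ∧ A ω = s} := by
      ext ω; simp only [Set.mem_setOf_eq]; tauto
    have hset0 : {ω | (X ω = x ∧ A ω = s) ∧ L ω = false} = {ω | X ω = x ∧ L ω = false ∧ A ω = s} := by
      ext ω; simp only [Set.mem_setOf_eq]; tauto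
    rw [hset1, hset0, hA0 x s, hX0 x] at h
    rw [hset, h]
    by_cases hP : ∃ j < a, (s : ℕ) = ((x : ℕ) * a + j) % d
    · rw [if_pos hP, hA1in x s hP, hX1 x]
      ring
    · rw [if_neg hP, hA1out x s hP]
      ring
  -- key algebraic identity
  have hkey : (a : ℝ) * (c * (1 - b)) = (d : ℝ) * (b * (1 - c)) := by
    have h := hratio
    field_simp at h
    linarith
  -- marginal of A
  have hmarg : ∀ s : Fin d, Pr p {ω | A ω = s} = (d : ℝ)⁻¹ := by
    intro s
    have h := hsum (fun ω => A ω = s)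
    rw [h]
    have hterm : ∀ x : Fin d, Pr p {ω | X ω = x ∧ A ω = s} = Pr p {ω | A ω = s ∧ X ω = x} := by
      intro x; congr 1; ext ω; simp only [Set.mem_setOf_eq]; tauto
    have hneg : (univ.filter (fun x : Fin d => ¬∃ j < a, (s : ℕ) = ((x : ℕ) * a + j) % d)).card
        = d - a := by
      have h2 := Finset.card_filter_add_card_filter_not
        (s := (univ : Finset (Fin d)))
        (p := fun x : Fin d => ∃ j < a, (s : ℕ) = ((x : ℕ) * a + j) % d)
      rw [count_S a d ha had s, Finset.card_univ, Fintype.card_fin] at h2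
      omega
    calc ∑ x : Fin d, Pr p {ω | X ω = x ∧ A ω = s}
        = ∑ x : Fin d, (if ∃ j < a, (s : ℕ) = ((x : ℕ) * a + j) % d
            then (1 - b) / d ^ 2 + b / (d * a) else (1 - b) / d ^ 2) := by
          refine Finset.sum_congr rfl fun x _ => ?_
          rw [hterm x, hjoint x s]
      _ = (d : ℝ)⁻¹ := by
          rw [Finset.sum_ite, Finset.sum_const, Finset.sum_const,
            count_S a d ha had s, hneg, nsmul_eq_mul, nsmul_eq_mul]
          push_cast [Nat.cast_sub had.le]
          field_simp
          ring
  -- main computation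
  unfold mutInfo
  calc (∑ s : Fin d, ∑ x : Fin d, Pr p {ω | A ω = s ∧ X ω = x} *
        Real.logb 2 (Pr p {ω | A ω = s ∧ X ω = x} /
          (Pr p {ω | A ω = s} * Pr p {ω | X ω = x})))
      = ∑ s : Fin d, ∑ x : Fin d, (if ∃ j < a, (s : ℕ) = ((x : ℕ) * a + j) % d
          then ((1 - b) / d ^ 2 + b / (d * a)) * (Real.logb 2 (1 - b) - Real.logb 2 (1 - c))
          else ((1 - b) / d ^ 2) * Real.logb 2 (1 - b)) := by
        refine Finset.sum_congr rfl fun s _ => Finset.sum_congr rfl fun x _ => ?_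
        rw [hjoint x s, hmarg s, hXunif x]
        by_cases hP : ∃ j < a, (s : ℕ) = ((x : ℕ) * a + j) % d
        · simp only [if_pos hP]
          have harg : ((1 - b) / d ^ 2 + b / (d * a)) / ((d : ℝ)⁻¹ * (d : ℝ)⁻¹)
              = (1 - b) / (1 - c) := by
            field_simp
            linear_combination (-1 : ℝ) * hkey
          rw [harg, Real.logb_div hb1 hc1]
        · simp only [if_neg hP]
          have harg : ((1 - b) / d ^ 2) / ((d : ℝ)⁻¹ * (d : ℝ)⁻¹) = 1 - b := by
            rw [show ((d : ℝ)⁻¹ * (d : ℝ)⁻¹) = ((d:ℝ)^2)⁻¹ by ring]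
            exact div_div_inv_cancel _ _ (pow_ne_zero 2 hd0)

          rw [harg]
    _ = ∑ x : Fin d, ∑ s : Fin d, (if ∃ j < a, (s : ℕ) = ((x : ℕ) * a + j) % d
          then ((1 - b) / d ^ 2 + b / (d * a)) * (Real.logb 2 (1 - b) - Real.logb 2 (1 - c))
          else ((1 - b) / d ^ 2) * Real.logb 2 (1 - b)) := Finset.sum_comm
    _ = ∑ _x : Fin d, ((a : ℝ) *
            (((1 - b) / d ^ 2 + b / (d * a)) * (Real.logb 2 (1 - b) - Real.logb 2 (1 - c)))
          + ((d : ℝ) - a) * (((1 - b) / d ^ 2) * Real.logb 2 (1 - b))) := by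
        refine Finset.sum_congr rfl fun x _ => ?_
        have hneg : (univ.filter (fun s : Fin d => ¬∃ j < a, (s : ℕ) = ((x : ℕ) * a + j) % d)).card
            = d - a := by
          have h2 := Finset.card_filter_add_card_filter_not
            (s := (univ : Finset (Fin d)))
            (p := fun s : Fin d => ∃ j < a, (s : ℕ) = ((x : ℕ) * a + j) % d)
          rw [count_T a d ha had x, Finset.card_univ, Fintype.card_fin] at h2
          omega
        rw [Finset.sum_ite, Finset.sum_const, Finset.sum_const,
          count_T a d ha had x, hneg, nsmul_eq_mul, nsmul_eq_mul]
        push_cast [Nat.cast_sub had.le]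
        ring
    _ = (d : ℝ) * ((a : ℝ) *
            (((1 - b) / d ^ 2 + b / (d * a)) * (Real.logb 2 (1 - b) - Real.logb 2 (1 - c)))
          + ((d : ℝ) - a) * (((1 - b) / d ^ 2) * Real.logb 2 (1 - b))) := by
        rw [Finset.sum_const, Finset.card_univ, Fintype.card_fin, nsmul_eq_mul]
    _ = (-b * Real.logb 2 (1 - c) + c * Real.logb 2 (1 - b)) / c := by
        have k1 : (d : ℝ) * ((a : ℝ) * ((1 - b) / d ^ 2 + b / (d * a))) = b / c := by
          field_simp
          linear_combination hkey
        have k2 : (d : ℝ) * (((d : ℝ) - a) * ((1 - b) / d ^ 2)) = (c - b) / c := by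
          field_simp
          linear_combination (-1 : ℝ) * hkey
        set L1 := Real.logb 2 (1 - b)
        set L2 := Real.logb 2 (1 - c)
        have expand : (d : ℝ) * ((a : ℝ) *
              (((1 - b) / d ^ 2 + b / (d * a)) * (L1 - L2))
            + ((d : ℝ) - a) * (((1 - b) / d ^ 2) * L1))
            = ((d : ℝ) * ((a : ℝ) * ((1 - b) / d ^ 2 + b / (d * a)))) * (L1 - L2)
            + ((d : ℝ) * (((d : ℝ) - a) * ((1 - b) / d ^ 2))) * L1 := by ring
        rw [expand, k1, k2]
        field_simp
        ring
end

section
/- Let a, d be positive integers with 0 < a < d and let 0 < b < c < 1 satisfy a/d = b(1−c)/(c(1−b)). Let X be uniformly distributed on {1,…,d}, let L be {0,1}-valued with Pr(L=1)=b and independent of X, and let the message A be distributed as follows: given L=0, A is uniform on {1,…,d} and independent of X; given L=1 and X=x, A is uniform on the set S_x := {1+(x−1)a, 2+(x−1)a, …, xa} reduced modulo d into {1,…,d}. Then for every x ∈ {1,…,d}: if t ∈ S_x then Pr(L=1 | A=t, X=x) = c, and if t ∉ S_x then Pr(L=1 | A=t, X=x) = 0. -/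
open Finset

/-- Example: posterior suspicion. In the setting of the example
protocol, for every `x` and message `t`: if `t ∈ S_x` then
`Pr(L=1 | A=t, X=x) = c`, and if `t ∉ S_x` then `Pr(L=1 | A=t, X=x) = 0`.
(`Fin d` is the 0-based encoding of `{1,…,d}`, and
`t ∈ S_x ↔ ∃ j < a, t = (x·a+j) % d`.) -/
theorem example_posterior_eq {Ω : Type*} [Fintype Ω]
    (a d : ℕ) (ha : 0 < a) (had : a < d)
    (b c : ℝ) (hb : 0 < b) (hbc : b < c) (hc : c < 1)
    (hratio : (a : ℝ) / d = b * (1 - c) / (c * (1 - b)))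
    (p : Ω → ℝ) (hp : ∀ ω, 0 ≤ p ω) (hp1 : ∑ ω, p ω = 1)
    (X A : Ω → Fin d) (L : Ω → Bool)
    (hXunif : ∀ x, Pr p {ω | X ω = x} = (d : ℝ)⁻¹)
    (hL : Pr p {ω | L ω = true} = b)
    (hXL : ∀ x, Pr p {ω | X ω = x ∧ L ω = true} = Pr p {ω | X ω = x} * b)
    (hA0 : ∀ (x t : Fin d),
      Pr p {ω | X ω = x ∧ L ω = false ∧ A ω = t} =
        Pr p {ω | X ω = x ∧ L ω = false} * (d : ℝ)⁻¹)
    (hA1in : ∀ (x t : Fin d), (∃ j < a, (t : ℕ) = ((x : ℕ) * a + j) % d) →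
      Pr p {ω | X ω = x ∧ L ω = true ∧ A ω = t} =
        Pr p {ω | X ω = x ∧ L ω = true} * (a : ℝ)⁻¹)
    (hA1out : ∀ (x t : Fin d), ¬(∃ j < a, (t : ℕ) = ((x : ℕ) * a + j) % d) →
      Pr p {ω | X ω = x ∧ L ω = true ∧ A ω = t} = 0) :
    ∀ (x t : Fin d),
      ((∃ j < a, (t : ℕ) = ((x : ℕ) * a + j) % d) →
        cPr p {ω | L ω = true} {ω | A ω = t ∧ X ω = x} = c) ∧
      (¬(∃ j < a, (t : ℕ) = ((x : ℕ) * a + j) % d) →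
        cPr p {ω | L ω = true} {ω | A ω = t ∧ X ω = x} = 0) := by
  intro x t
  have hdR : (0:ℝ) < d := by exact_mod_cast (ha.trans had)
  have haR : (0:ℝ) < a := by exact_mod_cast ha
  have hb1 : (0:ℝ) < 1 - b := by linarith
  have hc0 : (0:ℝ) < c := lt_trans hb hbc
  -- splitting lemma
  have hsplit : ∀ (E : Ω → Prop), Pr p {ω | E ω} =
      Pr p {ω | E ω ∧ L ω = true} + Pr p {ω | E ω ∧ L ω = false} := by
    intro E
    unfold Pr
    rw [← Finset.sum_add_distrib]
    apply Finset.sum_congr rfl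
    intro ω _
    by_cases hE : E ω
    · cases hLω : L ω <;>
        simp [Set.indicator_apply, Set.mem_setOf_eq, hE, hLω]
    · simp [Set.indicator_apply, Set.mem_setOf_eq, hE]
  have hPrcongr : ∀ (S T : Set Ω), S = T → Pr p S = Pr p T := fun S T h => by rw [h]
  -- Pr(X=x, L=true) = d⁻¹ * b
  have hXt : Pr p {ω | X ω = x ∧ L ω = true} = (d:ℝ)⁻¹ * b := by
    rw [hXL x, hXunif x]
  -- Pr(X=x, L=false) = d⁻¹ * (1-b)
  have hXf : Pr p {ω | X ω = x ∧ L ω = false} = (d:ℝ)⁻¹ * (1 - b) := by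
    have h1 := hsplit (fun ω => X ω = x)
    simp only [hXunif x] at h1
    have : Pr p {ω | X ω = x ∧ L ω = true} = (d:ℝ)⁻¹ * b := hXt
    linarith [h1, this]
  -- denominator decomposition
  have hden : Pr p {ω | A ω = t ∧ X ω = x} =
      Pr p {ω | X ω = x ∧ L ω = true ∧ A ω = t} +
      Pr p {ω | X ω = x ∧ L ω = false ∧ A ω = t} := by
    have h1 := hsplit (fun ω => A ω = t ∧ X ω = x)
    have e1 : {ω | (A ω = t ∧ X ω = x) ∧ L ω = true} =
        {ω | X ω = x ∧ L ω = true ∧ A ω = t} :=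
      Set.ext fun ω => by simp only [Set.mem_setOf_eq]; tauto
    have e2 : {ω | (A ω = t ∧ X ω = x) ∧ L ω = false} =
        {ω | X ω = x ∧ L ω = false ∧ A ω = t} :=
      Set.ext fun ω => by simp only [Set.mem_setOf_eq]; tauto
    rw [hPrcongr _ _ e1, hPrcongr _ _ e2] at h1
    exact h1
  -- numerator set equality
  have hnum : Pr p ({ω | L ω = true} ∩ {ω | A ω = t ∧ X ω = x}) =
      Pr p {ω | X ω = x ∧ L ω = true ∧ A ω = t} := by
    apply hPrcongr
    exact Set.ext fun ω => by simp only [Set.mem_inter_iff, Set.mem_setOf_eq]; tauto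
  have hF : Pr p {ω | X ω = x ∧ L ω = false ∧ A ω = t} = (d:ℝ)⁻¹ * (1 - b) * (d:ℝ)⁻¹ := by
    rw [hA0 x t, hXf]
  -- cross-multiplied ratio
  have hcross : (a:ℝ) * (c * (1 - b)) = (d:ℝ) * (b * (1 - c)) := by
    have hne : c * (1 - b) ≠ 0 := by positivity
    field_simp at hratio
    linarith [hratio]
  constructor
  · intro hin
    have hT : Pr p {ω | X ω = x ∧ L ω = true ∧ A ω = t} = (d:ℝ)⁻¹ * b * (a:ℝ)⁻¹ := by
      rw [hA1in x t hin, hXt]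
    unfold cPr
    rw [hnum, hden, hT, hF]
    have hdenpos : (0:ℝ) < (d:ℝ)⁻¹ * b * (a:ℝ)⁻¹ + (d:ℝ)⁻¹ * (1 - b) * (d:ℝ)⁻¹ := by positivity
    rw [div_eq_iff (ne_of_gt hdenpos)]
    have hde : (d:ℝ) ≠ 0 := ne_of_gt hdR
    have hae : (a:ℝ) ≠ 0 := ne_of_gt haR
    have key : b * (d:ℝ) = c * (b * d + (1 - b) * a) := by linear_combination -hcross
    field_simp
    linear_combination key
  · intro hout
    have hT : Pr p {ω | X ω = x ∧ L ω = true ∧ A ω = t} = 0 := hA1out x t hout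
    unfold cPr
    rw [hnum, hden, hT, hF]
    simp
end

section
/- Let n and l be integers with 0 < l < n, and for an integer k with 0 ≤ k ≤ n define the hypergeometric probability P_F(k) := C(2l,k)·C(2n−2l,n−k)/C(2n,n) (the probability that a uniformly random n-element subset of a 2n-element set containing 2l marked elements contains exactly k marked elements) and the binomial probability P_I(k) := C(n,k)·(l/n)^k·(1−l/n)^{n−k}. Then for every k with 0 ≤ k ≤ n, P_F(k) ≤ 2·P_I(k). -/
open Real Nat

private lemma my_sqrtpi_le_stirlingSeq (n : ℕ) (hn : n ≠ 0) :
    Real.sqrt π ≤ Stirling.stirlingSeq n := by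
  obtain ⟨m, rfl⟩ := Nat.exists_eq_succ_of_ne_zero hn
  exact Stirling.stirlingSeq'_antitone.le_of_tendsto
    (Stirling.tendsto_stirlingSeq_sqrt_pi.comp (Filter.tendsto_add_atTop_nat 1)) m

private lemma my_stirlingSeq_le (n : ℕ) (hn : n ≠ 0) :
    Stirling.stirlingSeq n ≤ Real.exp 1 / Real.sqrt 2 := by
  obtain ⟨m, rfl⟩ := Nat.exists_eq_succ_of_ne_zero hn
  have := Stirling.stirlingSeq'_antitone (Nat.zero_le m)
  simpa [Stirling.stirlingSeq_one] using this

private lemma my_fact_lower (j : ℕ) (hj : j ≠ 0) :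
    Real.sqrt π * Real.sqrt 2 * Real.sqrt j * ((j:ℝ)/Real.exp 1)^j ≤ (j ! : ℝ) := by
  have hj' : (0:ℝ) < j := by exact_mod_cast Nat.pos_of_ne_zero hj
  have hD : 0 < Real.sqrt (2*j) * ((j:ℝ)/Real.exp 1)^j := by positivity
  have h := my_sqrtpi_le_stirlingSeq j hj
  rw [Stirling.stirlingSeq, le_div_iff₀ hD] at h
  have hs : Real.sqrt (2*(j:ℝ)) = Real.sqrt 2 * Real.sqrt j := Real.sqrt_mul (by norm_num) _
  rw [hs] at h
  linarith [h]

private lemma my_fact_upper (j : ℕ) (hj : j ≠ 0) :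
    (j ! : ℝ) ≤ Real.exp 1 * Real.sqrt j * ((j:ℝ)/Real.exp 1)^j := by
  have hj' : (0:ℝ) < j := by exact_mod_cast Nat.pos_of_ne_zero hj
  have hD : 0 < Real.sqrt (2*j) * ((j:ℝ)/Real.exp 1)^j := by positivity
  have h := my_stirlingSeq_le j hj
  rw [Stirling.stirlingSeq, div_le_iff₀ hD] at h
  have hs : Real.sqrt (2*(j:ℝ)) = Real.sqrt 2 * Real.sqrt j := Real.sqrt_mul (by norm_num) _
  have h2pos : (0:ℝ) < Real.sqrt 2 := Real.sqrt_pos.mpr (by norm_num)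
  rw [hs] at h
  calc (j ! : ℝ) ≤ Real.exp 1 / Real.sqrt 2 * (Real.sqrt 2 * Real.sqrt j * ((j:ℝ)/Real.exp 1)^j) := h
  _ = Real.exp 1 * Real.sqrt j * ((j:ℝ)/Real.exp 1)^j := by
      field_simp

private lemma my_key_const : 2 * Real.exp 1 ^ 3 ≤ 8 * (π * Real.sqrt π) := by
  have e9 : Real.exp 1 < 2.7182818286 := Real.exp_one_lt_d9
  have hE3 : Real.exp 1 ^ 3 ≤ 2.7182818286 ^ 3 :=
    pow_le_pow_left₀ (Real.exp_pos 1).le e9.le 3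
  have hpi : (3.141592:ℝ) < π := Real.pi_gt_d6
  have hsp : (1.77:ℝ) ≤ Real.sqrt π := by
    nlinarith [Real.sq_sqrt Real.pi_pos.le, Real.sqrt_nonneg π,
      sq_nonneg (Real.sqrt π - 1.77)]
  nlinarith [hE3, hpi, hsp, Real.sqrt_nonneg π]

private lemma my_fcross (a b : ℕ) (ha : a ≠ 0) (hb : b ≠ 0) :
    (((a+b)! : ℕ) : ℝ) * ((2*a)! : ℝ) * ((2*b)! : ℝ) * ((a:ℝ)+(b:ℝ))^(a+b)
    ≤ 2 * ((2*(a+b))! : ℝ) * (a ! : ℝ) * (b ! : ℝ) * (a:ℝ)^a * (b:ℝ)^b := by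
  have hEpos : (0:ℝ) < Real.exp 1 := Real.exp_pos 1
  have hA : (0:ℝ) < a := by exact_mod_cast Nat.pos_of_ne_zero ha
  have hB : (0:ℝ) < b := by exact_mod_cast Nat.pos_of_ne_zero hb
  have h2 : Real.sqrt 2 * Real.sqrt 2 = 2 := Real.mul_self_sqrt (by norm_num)
  have hp : Real.sqrt π * Real.sqrt π = π := Real.mul_self_sqrt Real.pi_pos.le
  set E := Real.exp 1 with hE
  have u1 : (((a+b)! : ℕ) : ℝ) ≤ E * Real.sqrt ((a:ℝ)+(b:ℝ)) * (((a:ℝ)+(b:ℝ))/E)^(a+b) := by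
    have := my_fact_upper (a+b) (by omega)
    push_cast at this
    exact this
  have u2 : (((2*a)! : ℕ) : ℝ) ≤ E * Real.sqrt 2 * Real.sqrt a * ((2*(a:ℝ))/E)^(2*a) := by
    have := my_fact_upper (2*a) (by omega)
    have hs : Real.sqrt ((2*a : ℕ) : ℝ) = Real.sqrt 2 * Real.sqrt a := by
      push_cast; exact Real.sqrt_mul (by norm_num) _
    rw [hs] at this
    push_cast at this ⊢
    linarith
  have u3 : (((2*b)! : ℕ) : ℝ) ≤ E * Real.sqrt 2 * Real.sqrt b * ((2*(b:ℝ))/E)^(2*b) := by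
    have := my_fact_upper (2*b) (by omega)
    have hs : Real.sqrt ((2*b : ℕ) : ℝ) = Real.sqrt 2 * Real.sqrt b := by
      push_cast; exact Real.sqrt_mul (by norm_num) _
    rw [hs] at this
    push_cast at this ⊢
    linarith
  have l1 : Real.sqrt π * 2 * Real.sqrt ((a:ℝ)+(b:ℝ)) * ((2*((a:ℝ)+(b:ℝ)))/E)^(2*(a+b))
      ≤ (((2*(a+b))! : ℕ) : ℝ) := by
    have := my_fact_lower (2*(a+b)) (by omega)
    have hs : Real.sqrt ((2*(a+b) : ℕ) : ℝ) = Real.sqrt 2 * Real.sqrt ((a:ℝ)+(b:ℝ)) := by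
      push_cast; exact Real.sqrt_mul (by norm_num) _
    rw [hs] at this
    push_cast at this ⊢
    nlinarith [this, h2, Real.sqrt_nonneg π, Real.sqrt_nonneg ((a:ℝ)+(b:ℝ)),
      pow_pos (div_pos (by positivity : (0:ℝ) < 2*((a:ℝ)+(b:ℝ))) hEpos) (2*(a+b))]
  have l2 : Real.sqrt π * Real.sqrt 2 * Real.sqrt a * ((a:ℝ)/E)^a ≤ ((a ! : ℕ) : ℝ) :=
    my_fact_lower a ha
  have l3 : Real.sqrt π * Real.sqrt 2 * Real.sqrt b * ((b:ℝ)/E)^b ≤ ((b ! : ℕ) : ℝ) :=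
    my_fact_lower b hb
  have hNpos : (0:ℝ) < (a:ℝ)+(b:ℝ) := by positivity
  generalize hgen : ((a:ℝ)+(b:ℝ)) = N at u1 l1 hNpos ⊢
  have hKpos : 0 < Real.sqrt N * Real.sqrt a * Real.sqrt b *
      (N^(2*(a+b)) * 2^(2*a+2*b) * (a:ℝ)^(2*a) * (b:ℝ)^(2*b) / E^(3*a+3*b)) := by
    positivity
  have hXeq : (E * Real.sqrt N * (N/E)^(a+b)) *
      (E * Real.sqrt 2 * Real.sqrt a * ((2*(a:ℝ))/E)^(2*a)) *
      (E * Real.sqrt 2 * Real.sqrt b * ((2*(b:ℝ))/E)^(2*b)) * N^(a+b)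
      = (2 * E^3) * (Real.sqrt N * Real.sqrt a * Real.sqrt b *
        (N^(2*(a+b)) * 2^(2*a+2*b) * (a:ℝ)^(2*a) * (b:ℝ)^(2*b) / E^(3*a+3*b))) := by
    simp only [div_pow]
    field_simp
    rw [Real.sq_sqrt (by norm_num : (0:ℝ) ≤ 2)]
    ring
  have hYeq : 2 * (Real.sqrt π * 2 * Real.sqrt N * ((2*N)/E)^(2*(a+b))) *
      (Real.sqrt π * Real.sqrt 2 * Real.sqrt a * ((a:ℝ)/E)^a) *
      (Real.sqrt π * Real.sqrt 2 * Real.sqrt b * ((b:ℝ)/E)^b) * (a:ℝ)^a * (b:ℝ)^b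
      = (8 * (π * Real.sqrt π)) * (Real.sqrt N * Real.sqrt a * Real.sqrt b *
        (N^(2*(a+b)) * 2^(2*a+2*b) * (a:ℝ)^(2*a) * (b:ℝ)^(2*b) / E^(3*a+3*b))) := by
    simp only [div_pow]
    field_simp
    rw [Real.sq_sqrt (by norm_num : (0:ℝ) ≤ 2), Real.sq_sqrt Real.pi_pos.le]
    ring
  calc (((a+b)! : ℕ) : ℝ) * ((2*a)! : ℝ) * ((2*b)! : ℝ) * N^(a+b)
      ≤ (E * Real.sqrt N * (N/E)^(a+b)) *
        (E * Real.sqrt 2 * Real.sqrt a * ((2*(a:ℝ))/E)^(2*a)) *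
        (E * Real.sqrt 2 * Real.sqrt b * ((2*(b:ℝ))/E)^(2*b)) * N^(a+b) := by
        gcongr <;> positivity
    _ = (2 * E^3) * _ := hXeq
    _ ≤ (8 * (π * Real.sqrt π)) * _ := mul_le_mul_of_nonneg_right my_key_const hKpos.le
    _ = 2 * (Real.sqrt π * 2 * Real.sqrt N * ((2*N)/E)^(2*(a+b))) *
        (Real.sqrt π * Real.sqrt 2 * Real.sqrt a * ((a:ℝ)/E)^a) *
        (Real.sqrt π * Real.sqrt 2 * Real.sqrt b * ((b:ℝ)/E)^b) * (a:ℝ)^a * (b:ℝ)^b := hYeq.symm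
    _ ≤ 2 * ((2*(a+b))! : ℝ) * (a ! : ℝ) * (b ! : ℝ) * (a:ℝ)^a * (b:ℝ)^b := by
        gcongr <;> positivity

private lemma my_base (a b : ℕ) (ha : a ≠ 0) (hb : b ≠ 0) :
    ((2*a).choose a : ℝ) * ((2*b).choose b : ℝ) * ((a:ℝ)+(b:ℝ))^(a+b)
    ≤ 2 * ((2*(a+b)).choose (a+b) : ℝ) * (((a+b).choose a : ℝ) * (a:ℝ)^a * (b:ℝ)^b) := by
  have ea : ((2*a).choose a : ℝ) = (2*a)! / (a ! * a !) := by
    have h := Nat.cast_choose ℝ (show a ≤ 2*a by omega)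
    rwa [show 2*a-a = a from by omega] at h
  have eb : ((2*b).choose b : ℝ) = (2*b)! / (b ! * b !) := by
    have h := Nat.cast_choose ℝ (show b ≤ 2*b by omega)
    rwa [show 2*b-b = b from by omega] at h
  have en : ((2*(a+b)).choose (a+b) : ℝ) = (2*(a+b))! / ((a+b)! * (a+b)!) := by
    have h := Nat.cast_choose ℝ (show a+b ≤ 2*(a+b) by omega)
    rwa [show 2*(a+b)-(a+b) = a+b from by omega] at h
  have ec : (((a+b)).choose a : ℝ) = (a+b)! / (a ! * b !) := by
    have h := Nat.cast_choose ℝ (show a ≤ a+b by omega)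
    rwa [show a+b-a = b from by omega] at h
  rw [ea, eb, en, ec]
  have hfactpos : ∀ j : ℕ, (0:ℝ) < j ! := fun j => by exact_mod_cast Nat.factorial_pos j
  have e1 : ((2*a)! : ℝ) / ((a ! : ℝ) * (a ! : ℝ)) * (((2*b)! : ℝ) / ((b ! : ℝ) * (b ! : ℝ))) * ((a:ℝ)+(b:ℝ))^(a+b)
      = (((2*a)! : ℝ) * ((2*b)! : ℝ) * ((a:ℝ)+(b:ℝ))^(a+b)) / (((a ! : ℝ) * (a ! : ℝ)) * ((b ! : ℝ) * (b ! : ℝ))) := by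
    ring
  have e2 : 2 * (((2*(a+b))! : ℝ) / (((a+b)! : ℝ) * ((a+b)! : ℝ))) *
      ((((a+b)! : ℝ) / ((a ! : ℝ) * (b ! : ℝ))) * (a:ℝ)^a * (b:ℝ)^b)
      = (2 * ((2*(a+b))! : ℝ) * (((a+b)! : ℝ)) * (a:ℝ)^a * (b:ℝ)^b) /
        (((((a+b)! : ℝ)) * (((a+b)! : ℝ))) * ((a ! : ℝ) * (b ! : ℝ))) := by
    ring
  rw [e1, e2, div_le_div_iff₀ (by positivity) (by positivity)]
  have H := mul_le_mul_of_nonneg_right (my_fcross a b ha hb)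
    (show (0:ℝ) ≤ (((a+b)! : ℝ)) * ((a ! : ℝ) * (b ! : ℝ)) by positivity)
  nlinarith [H]

private lemma my_step_ge (a b k s : ℕ) (hk : a ≤ k) (hn : k + s + 1 = a + b) :
    (2*a).choose (k+1) * (2*b).choose s * ((a+b).choose k * a^k * b^(s+1))
    ≤ (2*a).choose k * (2*b).choose (s+1) * ((a+b).choose (k+1) * a^(k+1) * b^s) := by
  have i1 : (2*a).choose (k+1) * (k+1) = (2*a).choose k * (2*a - k) :=
    Nat.choose_succ_right_eq _ _
  have i2 : (2*b).choose (s+1) * (s+1) = (2*b).choose s * (2*b - s) :=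
    Nat.choose_succ_right_eq _ _
  have i3 : (a+b).choose (k+1) * (k+1) = (a+b).choose k * (s+1) := by
    have := Nat.choose_succ_right_eq (a+b) k
    rwa [show a + b - k = s + 1 by omega] at this
  have core : (2*a - k) * b ≤ (2*b - s) * a := by
    rcases le_or_gt k (2*a) with h1 | h1
    · have h2 : s ≤ 2*b := by omega
      zify [h1, h2]
      nlinarith [Nat.mul_le_mul_right (a+b) hk]
    · simp [Nat.sub_eq_zero_of_le h1.le]
  apply Nat.le_of_mul_le_mul_right _ (Nat.succ_pos k)
  apply Nat.le_of_mul_le_mul_right _ (Nat.succ_pos s)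
  have e1 : (2*a).choose (k+1) * (2*b).choose s * ((a+b).choose k * a^k * b^(s+1)) * (k+1) * (s+1)
      = ((2*a).choose k * (2*b).choose s * ((a+b).choose k * (s+1) * a^k * b^s)) * ((2*a - k) * b) := by
    rw [show ((2*a).choose (k+1) * (2*b).choose s * ((a+b).choose k * a^k * b^(s+1)) * (k+1) * (s+1))
        = ((2*a).choose (k+1) * (k+1)) * ((2*b).choose s * ((a+b).choose k * a^k * b^(s+1)) * (s+1)) by ring,
      i1, pow_succ]
    ring
  have e2 : (2*a).choose k * (2*b).choose (s+1) * ((a+b).choose (k+1) * a^(k+1) * b^s) * (k+1) * (s+1)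
      = ((2*a).choose k * (2*b).choose s * ((a+b).choose k * (s+1) * a^k * b^s)) * ((2*b - s) * a) := by
    rw [show ((2*a).choose k * (2*b).choose (s+1) * ((a+b).choose (k+1) * a^(k+1) * b^s) * (k+1) * (s+1))
        = ((2*b).choose (s+1) * (s+1)) * (((a+b).choose (k+1) * (k+1)) * ((2*a).choose k * a^(k+1) * b^s)) by ring,
      i2, i3, pow_succ]
    ring
  rw [e1, e2]
  exact Nat.mul_le_mul_left _ core

private lemma my_step_le (a b k s : ℕ) (hk : k + 1 ≤ a) (hn : k + s + 1 = a + b) :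
    (2*a).choose k * (2*b).choose (s+1) * ((a+b).choose (k+1) * a^(k+1) * b^s)
    ≤ (2*a).choose (k+1) * (2*b).choose s * ((a+b).choose k * a^k * b^(s+1)) := by
  have i1 : (2*a).choose (k+1) * (k+1) = (2*a).choose k * (2*a - k) :=
    Nat.choose_succ_right_eq _ _
  have i2 : (2*b).choose (s+1) * (s+1) = (2*b).choose s * (2*b - s) :=
    Nat.choose_succ_right_eq _ _
  have i3 : (a+b).choose (k+1) * (k+1) = (a+b).choose k * (s+1) := by
    have := Nat.choose_succ_right_eq (a+b) k
    rwa [show a + b - k = s + 1 by omega] at this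
  have core : (2*b - s) * a ≤ (2*a - k) * b := by
    rcases le_or_gt s (2*b) with h1 | h1
    · have h2 : k ≤ 2*a := by omega
      zify [h1, h2]
      nlinarith [Nat.mul_le_mul_right (a+b) (show k + 1 ≤ a from hk)]
    · simp [Nat.sub_eq_zero_of_le h1.le]
  apply Nat.le_of_mul_le_mul_right _ (Nat.succ_pos k)
  apply Nat.le_of_mul_le_mul_right _ (Nat.succ_pos s)
  have e1 : (2*a).choose (k+1) * (2*b).choose s * ((a+b).choose k * a^k * b^(s+1)) * (k+1) * (s+1)
      = ((2*a).choose k * (2*b).choose s * ((a+b).choose k * (s+1) * a^k * b^s)) * ((2*a - k) * b) := by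
    rw [show ((2*a).choose (k+1) * (2*b).choose s * ((a+b).choose k * a^k * b^(s+1)) * (k+1) * (s+1))
        = ((2*a).choose (k+1) * (k+1)) * ((2*b).choose s * ((a+b).choose k * a^k * b^(s+1)) * (s+1)) by ring,
      i1, pow_succ]
    ring
  have e2 : (2*a).choose k * (2*b).choose (s+1) * ((a+b).choose (k+1) * a^(k+1) * b^s) * (k+1) * (s+1)
      = ((2*a).choose k * (2*b).choose s * ((a+b).choose k * (s+1) * a^k * b^s)) * ((2*b - s) * a) := by
    rw [show ((2*a).choose k * (2*b).choose (s+1) * ((a+b).choose (k+1) * a^(k+1) * b^s) * (k+1) * (s+1))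
        = ((2*b).choose (s+1) * (s+1)) * (((a+b).choose (k+1) * (k+1)) * ((2*a).choose k * a^(k+1) * b^s)) by ring,
      i2, i3, pow_succ]
    ring
  rw [e1, e2]
  exact Nat.mul_le_mul_left _ core

private lemma my_ratio_max (a b : ℕ) (ha : 0 < a) (hb : 0 < b) (k : ℕ) (hk : k ≤ a+b) :
    (2*a).choose k * (2*b).choose (a+b-k) * ((a+b).choose a * a^a * b^b)
    ≤ (2*a).choose a * (2*b).choose b * ((a+b).choose k * a^k * b^(a+b-k)) := by
  have gpos : ∀ j, j ≤ a + b → 0 < (a+b).choose j * a^j * b^(a+b-j) := by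
    intro j hj
    exact Nat.mul_pos (Nat.mul_pos (Nat.choose_pos hj) (Nat.pow_pos ha))
      (Nat.pow_pos hb)
  rcases le_or_gt a k with hak | hak
  · have main : ∀ j, a ≤ j → j ≤ a + b →
        (2*a).choose j * (2*b).choose (a+b-j) * ((a+b).choose a * a^a * b^b)
        ≤ (2*a).choose a * (2*b).choose b * ((a+b).choose j * a^j * b^(a+b-j)) := by
      intro j haj
      induction j, haj using Nat.le_induction with
      | base =>
        intro _
        rw [Nat.add_sub_cancel_left]
      | succ j haj ih =>
        intro hj1
        have hj0 : j ≤ a + b := by omega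
        have IH := ih hj0
        have ST := my_step_ge a b j (a+b-j-1) haj (by omega)
        rw [show a + b - j = (a+b-j-1)+1 from by omega] at IH
        rw [show a + b - (j+1) = a+b-j-1 from by omega]
        have hgpos := gpos j hj0
        rw [show a + b - j = (a+b-j-1)+1 from by omega] at hgpos
        apply Nat.le_of_mul_le_mul_right _ hgpos
        nlinarith [mul_le_mul_left ST ((a+b).choose a * a^a * b^b),
          mul_le_mul_left IH ((a+b).choose (j+1) * a^(j+1) * b^(a+b-j-1))]
    exact main k hak hk
  · have main : ∀ i j, j + i = a →
        (2*a).choose j * (2*b).choose (a+b-j) * ((a+b).choose a * a^a * b^b)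
        ≤ (2*a).choose a * (2*b).choose b * ((a+b).choose j * a^j * b^(a+b-j)) := by
      intro i
      induction i with
      | zero =>
        intro j hj
        obtain rfl : j = a := by omega
        rw [Nat.add_sub_cancel_left]
      | succ i ih =>
        intro j hj
        have IH := ih (j+1) (by omega)
        have ST := my_step_le a b j (a+b-j-1) (by omega) (by omega)
        rw [show a + b - (j+1) = a+b-j-1 from by omega] at IH
        rw [show a + b - j = (a+b-j-1)+1 from by omega]
        have hgpos := gpos (j+1) (by omega)
        rw [show a + b - (j+1) = a+b-j-1 from by omega] at hgpos
        apply Nat.le_of_mul_le_mul_right _ hgpos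
        nlinarith [mul_le_mul_left ST ((a+b).choose a * a^a * b^b),
          mul_le_mul_left IH ((a+b).choose j * a^j * b^((a+b-j-1)+1))]
    exact main (a - k) k (by omega)

/-- the hypergeometric probability
`P_F(k) = C(2l,k)·C(2n−2l,n−k)/C(2n,n)` is at most twice the binomial
probability `P_I(k) = C(n,k)·(l/n)^k·(1−l/n)^{n−k}`. -/
theorem hypergeom_le_two_mul_binomial (n l : ℕ) (hl : 0 < l) (hln : l < n)
    (k : ℕ) (hk : k ≤ n) :
    ((2 * l).choose k : ℝ) * ((2 * n - 2 * l).choose (n - k) : ℝ) /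
        ((2 * n).choose n : ℝ) ≤
      2 * ((n.choose k : ℝ) * ((l : ℝ) / n) ^ k * (1 - (l : ℝ) / n) ^ (n - k)) := by
  obtain ⟨b, rfl⟩ : ∃ b, n = l + b := ⟨n - l, by omega⟩
  have hb : 0 < b := by omega
  rw [show 2*(l+b) - 2*l = 2*b from by omega]
  have hA : (0:ℝ) < l := by exact_mod_cast hl
  have hB : (0:ℝ) < b := by exact_mod_cast hb
  have hN : (0:ℝ) < ((l:ℝ) + b) := by positivity
  have hNcast : ((l+b : ℕ) : ℝ) = (l:ℝ) + b := by push_cast; ring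
  have hCpos : (0:ℝ) < ((2*(l+b)).choose (l+b) : ℝ) := by
    exact_mod_cast Nat.choose_pos (show l+b ≤ 2*(l+b) by omega)
  -- the key natural-number inequality, cast to ℝ
  have RM := my_ratio_max l b hl hb k hk
  have RMR : ((2*l).choose k : ℝ) * ((2*b).choose (l+b-k) : ℝ) *
      (((l+b).choose l : ℝ) * (l:ℝ)^l * (b:ℝ)^b)
      ≤ ((2*l).choose l : ℝ) * ((2*b).choose b : ℝ) *
      (((l+b).choose k : ℝ) * (l:ℝ)^k * (b:ℝ)^(l+b-k)) := by
    exact_mod_cast RM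
  have BASE := my_base l b (by omega) (by omega)
  have hgapos : (0:ℝ) < ((l+b).choose l : ℝ) * (l:ℝ)^l * (b:ℝ)^b := by
    have : 0 < ((l+b).choose l : ℝ) := by
      exact_mod_cast Nat.choose_pos (show l ≤ l+b by omega)
    positivity
  have hgkpos : (0:ℝ) ≤ ((l+b).choose k : ℝ) * (l:ℝ)^k * (b:ℝ)^(l+b-k) := by positivity
  -- KEY : f k * N^n ≤ 2 * C(2n,n) * g k
  have KEY : ((2*l).choose k : ℝ) * ((2*b).choose (l+b-k) : ℝ) * ((l:ℝ)+b)^(l+b)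
      ≤ 2 * ((2*(l+b)).choose (l+b) : ℝ) *
        (((l+b).choose k : ℝ) * (l:ℝ)^k * (b:ℝ)^(l+b-k)) := by
    rw [← mul_le_mul_iff_of_pos_right hgapos]
    calc ((2*l).choose k : ℝ) * ((2*b).choose (l+b-k) : ℝ) * ((l:ℝ)+b)^(l+b) *
          (((l+b).choose l : ℝ) * (l:ℝ)^l * (b:ℝ)^b)
        ≤ ((2*l).choose l : ℝ) * ((2*b).choose b : ℝ) *
          (((l+b).choose k : ℝ) * (l:ℝ)^k * (b:ℝ)^(l+b-k)) * ((l:ℝ)+b)^(l+b) := by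
          nlinarith [mul_le_mul_of_nonneg_right RMR (show (0:ℝ) ≤ ((l:ℝ)+b)^(l+b) by positivity)]
      _ ≤ 2 * ((2*(l+b)).choose (l+b) : ℝ) * (((l+b).choose l : ℝ) * (l:ℝ)^l * (b:ℝ)^b) *
          (((l+b).choose k : ℝ) * (l:ℝ)^k * (b:ℝ)^(l+b-k)) := by
          nlinarith [mul_le_mul_of_nonneg_right BASE hgkpos]
      _ = 2 * ((2*(l+b)).choose (l+b) : ℝ) *
          (((l+b).choose k : ℝ) * (l:ℝ)^k * (b:ℝ)^(l+b-k)) *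
          (((l+b).choose l : ℝ) * (l:ℝ)^l * (b:ℝ)^b) := by ring
  -- rewrite the RHS of the goal
  have h1 : 1 - (l:ℝ)/((l+b:ℕ):ℝ) = (b:ℝ)/((l:ℝ)+b) := by
    rw [hNcast]
    field_simp
    ring
  have h2 : ((l:ℝ)/((l+b:ℕ):ℝ)) = (l:ℝ)/((l:ℝ)+b) := by rw [hNcast]
  rw [h1, h2, div_pow, div_pow]
  rw [div_le_iff₀ hCpos]
  have hpowsplit : ((l:ℝ)+b)^k * ((l:ℝ)+b)^(l+b-k) = ((l:ℝ)+b)^(l+b) := by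
    rw [← pow_add]
    congr 1
    omega
  have hNk : (0:ℝ) < ((l:ℝ)+b)^k := by positivity
  have hNnk : (0:ℝ) < ((l:ℝ)+b)^(l+b-k) := by positivity
  have expand : 2 * (((l+b).choose k : ℝ) * ((l:ℝ)^k / ((l:ℝ)+b)^k) *
      ((b:ℝ)^(l+b-k) / ((l:ℝ)+b)^(l+b-k))) * ((2*(l+b)).choose (l+b) : ℝ)
      = (2 * ((2*(l+b)).choose (l+b) : ℝ) *
        (((l+b).choose k : ℝ) * (l:ℝ)^k * (b:ℝ)^(l+b-k))) / (((l:ℝ)+b)^(l+b)) := by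
    rw [← hpowsplit]
    field_simp
  rw [expand, le_div_iff₀ (by positivity)]
  linarith [KEY]
end

section
/- Let n and l be integers with 0 < l < n, and for 0 ≤ k ≤ n define P_F(k) := C(2l,k)·C(2n−2l,n−k)/C(2n,n) and P_I(k) := C(n,k)·(l/n)^k·(1−l/n)^{n−k}. Then the ratio P_F(k)/P_I(k) is maximized at k = l; equivalently, for every k with 0 ≤ k ≤ n, P_F(k)·P_I(l) ≤ P_F(l)·P_I(k). -/
private lemma hbrm_key2 (a b : ℕ) : ∀ d, d ≤ b → a^d * a.factorial * b.factorial ≤ b^d * (a+d).factorial * (b-d).factorial := by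
  intro d
  induction d with
  | zero => simp
  | succ d ih =>
    intro hd
    have hd' : d ≤ b := by omega
    have h1 : b - d = (b - (d+1)) + 1 := by omega
    have h2 : b - (d+1) + 1 = b - d := by omega
    have step : a * (b - d) ≤ b * (a + d + 1) := by
      calc a * (b-d) ≤ a * b := Nat.mul_le_mul_left a (Nat.sub_le b d)
        _ ≤ (a + d + 1) * b := Nat.mul_le_mul_right b (by omega)
        _ = b * (a+d+1) := Nat.mul_comm _ _
    calc a^(d+1) * a.factorial * b.factorial
        = a * (a^d * a.factorial * b.factorial) := by ring
      _ ≤ a * (b^d * (a+d).factorial * (b-d).factorial) := Nat.mul_le_mul_left a (ih hd')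
      _ = (a * (b-d)) * (b^d * (a+d).factorial * (b-(d+1)).factorial) := by
            rw [h1, Nat.factorial_succ, h2]; ring
      _ ≤ (b * (a+d+1)) * (b^d * (a+d).factorial * (b-(d+1)).factorial) := Nat.mul_le_mul_right _ step
      _ = b^(d+1) * (a+(d+1)).factorial * (b-(d+1)).factorial := by
            rw [show a+(d+1) = (a+d)+1 by ring, Nat.factorial_succ]; ring

lemma case1 (a b d : ℕ) (hd1 : d ≤ a) (hd2 : d ≤ b) :
    (2*a).choose (a-d) * (2*b).choose (b+d) * ((a+b).choose a * a^a * b^b)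
    ≤ (2*a).choose a * (2*b).choose b * ((a+b).choose (a-d) * a^(a-d) * b^(b+d)) := by
  have e1 : (2*a).choose (a-d) * ((a-d).factorial * (a+d).factorial) = (2*a).factorial := by
    have h := Nat.choose_mul_factorial_mul_factorial (show a-d ≤ 2*a by omega)
    rw [show 2*a - (a-d) = a+d by omega] at h
    rw [← h]; ring
  have e2 : (2*b).choose (b+d) * ((b+d).factorial * (b-d).factorial) = (2*b).factorial := by
    have h := Nat.choose_mul_factorial_mul_factorial (show b+d ≤ 2*b by omega)
    rw [show 2*b - (b+d) = b-d by omega] at h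
    rw [← h]; ring
  have e3 : (a+b).choose a * (a.factorial * b.factorial) = (a+b).factorial := by
    have h := Nat.choose_mul_factorial_mul_factorial (show a ≤ a+b by omega)
    rw [show a+b-a = b by omega] at h
    rw [← h]; ring
  have e4 : (2*a).choose a * (a.factorial * a.factorial) = (2*a).factorial := by
    have h := Nat.choose_mul_factorial_mul_factorial (show a ≤ 2*a by omega)
    rw [show 2*a-a = a by omega] at h
    rw [← h]; ring
  have e5 : (2*b).choose b * (b.factorial * b.factorial) = (2*b).factorial := by
    have h := Nat.choose_mul_factorial_mul_factorial (show b ≤ 2*b by omega)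
    rw [show 2*b-b = b by omega] at h
    rw [← h]; ring
  have e6 : (a+b).choose (a-d) * ((a-d).factorial * (b+d).factorial) = (a+b).factorial := by
    have h := Nat.choose_mul_factorial_mul_factorial (show a-d ≤ a+b by omega)
    rw [show a+b-(a-d) = b+d by omega] at h
    rw [← h]; ring
  have inner : a^a * b^b * (a.factorial * b.factorial)
      ≤ a^(a-d) * b^(b+d) * ((a+d).factorial * (b-d).factorial) := by
    calc a^a * b^b * (a.factorial * b.factorial)
        = a^(a-d) * b^b * (a^d * a.factorial * b.factorial) := by
          rw [← pow_sub_mul_pow a hd1]; ring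
      _ ≤ a^(a-d) * b^b * (b^d * (a+d).factorial * (b-d).factorial) :=
          Nat.mul_le_mul_left _ (hbrm_key2 a b d hd2)
      _ = a^(a-d) * b^(b+d) * ((a+d).factorial * (b-d).factorial) := by
          rw [pow_add]; ring
  set M := (a-d).factorial * (a+d).factorial * (b+d).factorial * (b-d).factorial *
    a.factorial * b.factorial * (a.factorial * a.factorial * b.factorial * b.factorial *
    (a-d).factorial * (b+d).factorial) with hM
  have hMpos : 0 < M := by positivity
  apply Nat.le_of_mul_le_mul_right _ hMpos
  calc (2*a).choose (a-d) * (2*b).choose (b+d) * ((a+b).choose a * a^a * b^b) * M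
      = ((2*a).choose (a-d) * ((a-d).factorial * (a+d).factorial)) *
        ((2*b).choose (b+d) * ((b+d).factorial * (b-d).factorial)) *
        ((a+b).choose a * (a.factorial * b.factorial)) * (a^a * b^b) *
        (a.factorial * a.factorial * b.factorial * b.factorial * (a-d).factorial * (b+d).factorial) := by
          rw [hM]; ring
    _ = (2*a).factorial * (2*b).factorial * (a+b).factorial * (a^a * b^b) *
        (a.factorial * a.factorial * b.factorial * b.factorial * (a-d).factorial * (b+d).factorial) := by
          rw [e1, e2, e3]
    _ = ((2*a).factorial * (2*b).factorial * (a+b).factorial * (a-d).factorial * (b+d).factorial *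
          a.factorial * b.factorial) * (a^a * b^b * (a.factorial * b.factorial)) := by ring
    _ ≤ ((2*a).factorial * (2*b).factorial * (a+b).factorial * (a-d).factorial * (b+d).factorial *
          a.factorial * b.factorial) * (a^(a-d) * b^(b+d) * ((a+d).factorial * (b-d).factorial)) :=
          Nat.mul_le_mul_left _ inner
    _ = ((2*a).choose a * (a.factorial * a.factorial)) * ((2*b).choose b * (b.factorial * b.factorial)) *
        ((a+b).choose (a-d) * ((a-d).factorial * (b+d).factorial)) * (a^(a-d) * b^(b+d)) *
        ((a-d).factorial * (a+d).factorial * (b+d).factorial * (b-d).factorial * a.factorial * b.factorial) := by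
          rw [e4, e5, e6]; ring
    _ = (2*a).choose a * (2*b).choose b * ((a+b).choose (a-d) * a^(a-d) * b^(b+d)) * M := by
          rw [hM]; ring

private lemma hbrm_case1 (a b d : ℕ) (hd1 : d ≤ a) (hd2 : d ≤ b) :
    (2*a).choose (a-d) * (2*b).choose (b+d) * ((a+b).choose a * a^a * b^b)
    ≤ (2*a).choose a * (2*b).choose b * ((a+b).choose (a-d) * a^(a-d) * b^(b+d)) := by
  have e1 : (2*a).choose (a-d) * ((a-d).factorial * (a+d).factorial) = (2*a).factorial := by
    have h := Nat.choose_mul_factorial_mul_factorial (show a-d ≤ 2*a by omega)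
    rw [show 2*a - (a-d) = a+d by omega] at h
    rw [← h]; ring
  have e2 : (2*b).choose (b+d) * ((b+d).factorial * (b-d).factorial) = (2*b).factorial := by
    have h := Nat.choose_mul_factorial_mul_factorial (show b+d ≤ 2*b by omega)
    rw [show 2*b - (b+d) = b-d by omega] at h
    rw [← h]; ring
  have e3 : (a+b).choose a * (a.factorial * b.factorial) = (a+b).factorial := by
    have h := Nat.choose_mul_factorial_mul_factorial (show a ≤ a+b by omega)
    rw [show a+b-a = b by omega] at h
    rw [← h]; ring
  have e4 : (2*a).choose a * (a.factorial * a.factorial) = (2*a).factorial := by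
    have h := Nat.choose_mul_factorial_mul_factorial (show a ≤ 2*a by omega)
    rw [show 2*a-a = a by omega] at h
    rw [← h]; ring
  have e5 : (2*b).choose b * (b.factorial * b.factorial) = (2*b).factorial := by
    have h := Nat.choose_mul_factorial_mul_factorial (show b ≤ 2*b by omega)
    rw [show 2*b-b = b by omega] at h
    rw [← h]; ring
  have e6 : (a+b).choose (a-d) * ((a-d).factorial * (b+d).factorial) = (a+b).factorial := by
    have h := Nat.choose_mul_factorial_mul_factorial (show a-d ≤ a+b by omega)
    rw [show a+b-(a-d) = b+d by omega] at h
    rw [← h]; ring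
  have inner : a^a * b^b * (a.factorial * b.factorial)
      ≤ a^(a-d) * b^(b+d) * ((a+d).factorial * (b-d).factorial) := by
    calc a^a * b^b * (a.factorial * b.factorial)
        = a^(a-d) * b^b * (a^d * a.factorial * b.factorial) := by
          rw [← pow_sub_mul_pow a hd1]; ring
      _ ≤ a^(a-d) * b^b * (b^d * (a+d).factorial * (b-d).factorial) :=
          Nat.mul_le_mul_left _ (hbrm_key2 a b d hd2)
      _ = a^(a-d) * b^(b+d) * ((a+d).factorial * (b-d).factorial) := by
          rw [pow_add]; ring
  set M := (a-d).factorial * (a+d).factorial * (b+d).factorial * (b-d).factorial *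
    a.factorial * b.factorial * (a.factorial * a.factorial * b.factorial * b.factorial *
    (a-d).factorial * (b+d).factorial) with hM
  have hMpos : 0 < M := by positivity
  apply Nat.le_of_mul_le_mul_right _ hMpos
  calc (2*a).choose (a-d) * (2*b).choose (b+d) * ((a+b).choose a * a^a * b^b) * M
      = ((2*a).choose (a-d) * ((a-d).factorial * (a+d).factorial)) *
        ((2*b).choose (b+d) * ((b+d).factorial * (b-d).factorial)) *
        ((a+b).choose a * (a.factorial * b.factorial)) * (a^a * b^b) *
        (a.factorial * a.factorial * b.factorial * b.factorial * (a-d).factorial * (b+d).factorial) := by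
          rw [hM]; ring
    _ = (2*a).factorial * (2*b).factorial * (a+b).factorial * (a^a * b^b) *
        (a.factorial * a.factorial * b.factorial * b.factorial * (a-d).factorial * (b+d).factorial) := by
          rw [e1, e2, e3]
    _ = ((2*a).factorial * (2*b).factorial * (a+b).factorial * (a-d).factorial * (b+d).factorial *
          a.factorial * b.factorial) * (a^a * b^b * (a.factorial * b.factorial)) := by ring
    _ ≤ ((2*a).factorial * (2*b).factorial * (a+b).factorial * (a-d).factorial * (b+d).factorial *
          a.factorial * b.factorial) * (a^(a-d) * b^(b+d) * ((a+d).factorial * (b-d).factorial)) :=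
          Nat.mul_le_mul_left _ inner
    _ = ((2*a).choose a * (a.factorial * a.factorial)) * ((2*b).choose b * (b.factorial * b.factorial)) *
        ((a+b).choose (a-d) * ((a-d).factorial * (b+d).factorial)) * (a^(a-d) * b^(b+d)) *
        ((a-d).factorial * (a+d).factorial * (b+d).factorial * (b-d).factorial * a.factorial * b.factorial) := by
          rw [e4, e5, e6]; ring
    _ = (2*a).choose a * (2*b).choose b * ((a+b).choose (a-d) * a^(a-d) * b^(b+d)) * M := by
          rw [hM]; ring


private lemma hbrm_case2 (a b d : ℕ) (hd1 : d ≤ a) (hd2 : d ≤ b) :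
    (2*a).choose (a+d) * (2*b).choose (b-d) * ((a+b).choose a * a^a * b^b)
    ≤ (2*a).choose a * (2*b).choose b * ((a+b).choose (a+d) * a^(a+d) * b^(b-d)) := by
  have h := hbrm_case1 b a d hd2 hd1
  rw [Nat.add_comm b a] at h
  have c1 : (a+b).choose b = (a+b).choose a := by
    have h' := Nat.choose_symm (show b ≤ a+b by omega)
    rw [show a+b-b = a by omega] at h'
    exact h'.symm
  have c2 : (a+b).choose (b-d) = (a+b).choose (a+d) := by
    have h' := Nat.choose_symm (show a+d ≤ a+b by omega)
    rw [show a+b-(a+d) = b-d by omega] at h'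
    exact h'
  rw [c1, c2] at h
  calc (2*a).choose (a+d) * (2*b).choose (b-d) * ((a+b).choose a * a^a * b^b)
      = (2*b).choose (b-d) * (2*a).choose (a+d) * ((a+b).choose a * b^b * a^a) := by ring
    _ ≤ (2*b).choose b * (2*a).choose a * ((a+b).choose (a+d) * b^(b-d) * a^(a+d)) := h
    _ = (2*a).choose a * (2*b).choose b * ((a+b).choose (a+d) * a^(a+d) * b^(b-d)) := by ring

private lemma hbrm_mainN (n l k : ℕ) (hl : 0 < l) (hln : l < n) (hk : k ≤ n) :
    (2*l).choose k * ((2*n-2*l).choose (n-k)) * (n.choose l * l^l * (n-l)^(n-l))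
    ≤ (2*l).choose l * ((2*n-2*l).choose (n-l)) * (n.choose k * l^k * (n-l)^(n-k)) := by
  obtain ⟨b, rfl⟩ : ∃ b, n = l + b := ⟨n - l, by omega⟩
  have hb : 0 < b := by omega
  rw [show 2*(l+b)-2*l = 2*b by omega, show (l+b)-l = b by omega]
  rcases le_or_gt k l with hkl | hkl
  · obtain ⟨d, hd, rfl⟩ : ∃ d, d ≤ l ∧ k = l - d := ⟨l - k, by omega, by omega⟩
    rcases le_or_gt d b with hdb | hdb
    · rw [show (l+b) - (l-d) = b+d by omega]
      exact hbrm_case1 l b d hd hdb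
    · rw [show (l+b) - (l-d) = b+d by omega,
        Nat.choose_eq_zero_of_lt (show 2*b < b+d by omega)]
      simp
  · obtain ⟨d, hd, rfl⟩ : ∃ d, d ≤ b ∧ k = l + d := ⟨k - l, by omega, by omega⟩
    rcases le_or_gt d l with hdl | hdl
    · rw [show (l+b) - (l+d) = b-d by omega]
      exact hbrm_case2 l b d hdl hd
    · rw [Nat.choose_eq_zero_of_lt (show 2*l < l+d by omega)]
      simp


/-- the ratio `P_F(k)/P_I(k)` of the hypergeometric probability
`P_F(k) = C(2l,k)·C(2n−2l,n−k)/C(2n,n)` to the binomial probability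
`P_I(k) = C(n,k)·(l/n)^k·(1−l/n)^{n−k}` is maximized at `k = l`;
equivalently `P_F(k)·P_I(l) ≤ P_F(l)·P_I(k)` for all `0 ≤ k ≤ n`. -/
theorem hypergeom_binomial_ratio_max_at_l (n l : ℕ) (hl : 0 < l) (hln : l < n)
    (k : ℕ) (hk : k ≤ n) :
    (((2 * l).choose k : ℝ) * ((2 * n - 2 * l).choose (n - k) : ℝ) /
        ((2 * n).choose n : ℝ)) *
      ((n.choose l : ℝ) * ((l : ℝ) / n) ^ l * (1 - (l : ℝ) / n) ^ (n - l)) ≤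
    (((2 * l).choose l : ℝ) * ((2 * n - 2 * l).choose (n - l) : ℝ) /
        ((2 * n).choose n : ℝ)) *
      ((n.choose k : ℝ) * ((l : ℝ) / n) ^ k * (1 - (l : ℝ) / n) ^ (n - k)) := by
  have hn : 0 < n := lt_trans hl hln
  have hn0 : (0:ℝ) < n := by exact_mod_cast hn
  have h1 : (1 - (l:ℝ)/n) = ((n-l:ℕ):ℝ)/n := by
    rw [Nat.cast_sub hln.le, sub_div, div_self hn0.ne']
  have hp : ∀ j, j ≤ n → ((l:ℝ)/n)^j * (((n-l:ℕ):ℝ)/n)^(n-j)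
      = ((l^j * (n-l)^(n-j) : ℕ) : ℝ) / (n:ℝ)^n := by
    intro j hj
    rw [div_pow, div_pow, div_mul_div_comm, ← pow_add, Nat.add_sub_cancel' hj]
    push_cast; ring
  rw [h1, mul_assoc ((n.choose l : ℝ)), mul_assoc ((n.choose k : ℝ)), hp k hk, hp l hln.le]
  have hC : (0:ℝ) < ((2*n).choose n : ℝ) := by
    exact_mod_cast Nat.choose_pos (by omega : n ≤ 2*n)
  have key := hbrm_mainN n l k hl hln hk
  calc ((2 * l).choose k : ℝ) * ((2 * n - 2 * l).choose (n - k) : ℝ) /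
        ((2 * n).choose n : ℝ) *
      ((n.choose l : ℝ) * (((l^l * (n-l)^(n-l) : ℕ) : ℝ) / (n:ℝ)^n))
      = (((2*l).choose k * ((2*n-2*l).choose (n-k)) * (n.choose l * l^l * (n-l)^(n-l)) : ℕ) : ℝ)
        / (((2*n).choose n : ℝ) * (n:ℝ)^n) := by push_cast; ring
    _ ≤ (((2*l).choose l * ((2*n-2*l).choose (n-l)) * (n.choose k * l^k * (n-l)^(n-k)) : ℕ) : ℝ)
        / (((2*n).choose n : ℝ) * (n:ℝ)^n) := by
          gcongr

    _ = ((2 * l).choose l : ℝ) * ((2 * n - 2 * l).choose (n - l) : ℝ) /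
        ((2 * n).choose n : ℝ) *
      ((n.choose k : ℝ) * (((l^k * (n-l)^(n-k) : ℕ) : ℝ) / (n:ℝ)^n)) := by push_cast; ring
end

section
/- Let n and l be integers with 0 < l < n. Then C(2l,l)·C(2n−2l,n−l)·n^n ≤ √2·(e/√(2π))^3 · C(2n,n)·C(n,l)·l^l·(n−l)^{n−l}, and in particular C(2l,l)·C(2n−2l,n−l)·n^n < 2·C(2n,n)·C(n,l)·l^l·(n−l)^{n−l}. -/
open Real Filter Nat Topology in
private lemma sqrt_pi_le_stirlingSeq' (n : ℕ) : Real.sqrt π ≤ Stirling.stirlingSeq (n+1) := by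
  have ht : Tendsto (Stirling.stirlingSeq ∘ Nat.succ) atTop (𝓝 (Real.sqrt π)) :=
    Stirling.tendsto_stirlingSeq_sqrt_pi.comp (tendsto_add_atTop_nat 1)
  exact Stirling.stirlingSeq'_antitone.le_of_tendsto ht n

open Real Filter Nat Topology in
private lemma stirlingSeq_le' (n : ℕ) : Stirling.stirlingSeq (n+1) ≤ Real.exp 1 / Real.sqrt 2 := by
  have := Stirling.stirlingSeq'_antitone (Nat.zero_le n)
  simpa [Stirling.stirlingSeq_one] using this

open Real Filter Nat Topology in
private lemma fact_ge' (m : ℕ) :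
    Real.sqrt π * (Real.sqrt (2*m) * ((m:ℝ)/Real.exp 1)^m) ≤ m ! := by
  cases m with
  | zero => simp [Nat.factorial]
  | succ n =>
    have h := sqrt_pi_le_stirlingSeq' n
    have hD : (0:ℝ) < Real.sqrt (2*(n+1:ℕ)) * (((n+1:ℕ):ℝ)/Real.exp 1)^(n+1) := by
      positivity
    rw [Stirling.stirlingSeq, le_div_iff₀ hD] at h
    push_cast [Nat.succ_eq_add_one] at h ⊢
    linarith

open Real Filter Nat Topology in
private lemma fact_le' (m : ℕ) (hm : m ≠ 0) :
    (m ! : ℝ) ≤ (Real.exp 1 / Real.sqrt 2) * (Real.sqrt (2*m) * ((m:ℝ)/Real.exp 1)^m) := by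
  obtain ⟨n, rfl⟩ := Nat.exists_eq_succ_of_ne_zero hm
  have h := stirlingSeq_le' n
  have hD : (0:ℝ) < Real.sqrt (2*(n+1:ℕ)) * (((n+1:ℕ):ℝ)/Real.exp 1)^(n+1) := by
    positivity
  rw [Stirling.stirlingSeq, div_le_iff₀ hD] at h
  push_cast [Nat.succ_eq_add_one] at h ⊢
  linarith

open Real Filter Nat Topology in
private lemma stirling_ident' (a b : ℕ) (E : ℝ) (hE : 0 < E) :
    (E/Real.sqrt 2) * (Real.sqrt (2*((2*a:ℕ):ℝ)) * (((2*a:ℕ):ℝ)/E)^(2*a)) *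
      ((E/Real.sqrt 2) * (Real.sqrt (2*((2*b:ℕ):ℝ)) * (((2*b:ℕ):ℝ)/E)^(2*b))) *
      ((E/Real.sqrt 2) * (Real.sqrt (2*((a+b:ℕ):ℝ)) * (((a+b:ℕ):ℝ)/E)^(a+b))) *
      ((a:ℝ)+(b:ℝ))^(a+b)
    = Real.sqrt 2 * (E / Real.sqrt (2*π))^3 *
      (Real.sqrt π * (Real.sqrt (2*((2*(a+b):ℕ):ℝ)) * (((2*(a+b):ℕ):ℝ)/E)^(2*(a+b)))) *
      (Real.sqrt π * (Real.sqrt (2*(a:ℝ)) * ((a:ℝ)/E)^a)) *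
      (Real.sqrt π * (Real.sqrt (2*(b:ℝ)) * ((b:ℝ)/E)^b)) *
      (a:ℝ)^a * (b:ℝ)^b := by
  have hs2 : ∀ x:ℝ, 0 ≤ x → Real.sqrt (2*x) = Real.sqrt 2 * Real.sqrt x := fun x hx =>
    Real.sqrt_mul (by norm_num) x
  push_cast
  rw [hs2 π pi_pos.le, hs2 (2*((a:ℝ)+b)) (by positivity), hs2 ((a:ℝ)+b) (by positivity),
    hs2 (2*(a:ℝ)) (by positivity), hs2 (2*(b:ℝ)) (by positivity),
    hs2 (a:ℝ) (by positivity), hs2 (b:ℝ) (by positivity)]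
  have hsp : (0:ℝ) < Real.sqrt π := Real.sqrt_pos.mpr pi_pos
  have hs2p : (0:ℝ) < Real.sqrt 2 := by norm_num
  simp only [div_pow, mul_pow]
  field_simp
  ring

open Real Filter Nat Topology in
private lemma key_fact_ineq' (a b : ℕ) (ha : 0 < a) (hb : 0 < b) :
    ((2*a)! : ℝ) * ((2*b)! : ℝ) * ((a+b)! : ℝ) * ((a:ℝ)+(b:ℝ))^(a+b) ≤
    Real.sqrt 2 * (Real.exp 1 / Real.sqrt (2*Real.pi))^3 *
      ((2*(a+b))! : ℝ) * (a ! : ℝ) * (b ! : ℝ) * (a:ℝ)^a * (b:ℝ)^b := by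
  set E := Real.exp 1 with hEdef
  have hE : (0:ℝ) < E := Real.exp_pos 1
  have h1 := fact_le' (2*a) (by omega)
  have h2 := fact_le' (2*b) (by omega)
  have h3 := fact_le' (a+b) (by omega)
  have h4 := fact_ge' (2*(a+b))
  have h5 := fact_ge' a
  have h6 := fact_ge' b
  calc ((2*a)! : ℝ) * ((2*b)! : ℝ) * ((a+b)! : ℝ) * ((a:ℝ)+(b:ℝ))^(a+b)
      ≤ (E/Real.sqrt 2) * (Real.sqrt (2*((2*a:ℕ):ℝ)) * (((2*a:ℕ):ℝ)/E)^(2*a)) *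
        ((E/Real.sqrt 2) * (Real.sqrt (2*((2*b:ℕ):ℝ)) * (((2*b:ℕ):ℝ)/E)^(2*b))) *
        ((E/Real.sqrt 2) * (Real.sqrt (2*((a+b:ℕ):ℝ)) * (((a+b:ℕ):ℝ)/E)^(a+b))) *
        ((a:ℝ)+(b:ℝ))^(a+b) := by
        gcongr
    _ = Real.sqrt 2 * (E / Real.sqrt (2*π))^3 *
        (Real.sqrt π * (Real.sqrt (2*((2*(a+b):ℕ):ℝ)) * (((2*(a+b):ℕ):ℝ)/E)^(2*(a+b)))) *
        (Real.sqrt π * (Real.sqrt (2*(a:ℝ)) * ((a:ℝ)/E)^a)) *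
        (Real.sqrt π * (Real.sqrt (2*(b:ℝ)) * ((b:ℝ)/E)^b)) *
        (a:ℝ)^a * (b:ℝ)^b := stirling_ident' a b E hE
    _ ≤ Real.sqrt 2 * (E / Real.sqrt (2*π))^3 *
        ((2*(a+b))! : ℝ) * (a ! : ℝ) * (b ! : ℝ) * (a:ℝ)^a * (b:ℝ)^b := by
        gcongr

open Real Filter Nat Topology in
private lemma const_lt_two' : Real.sqrt 2 * (Real.exp 1 / Real.sqrt (2*π)) ^ 3 < 2 := by
  set c := Real.sqrt 2 * (Real.exp 1 / Real.sqrt (2*π)) ^ 3 with hc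
  have hc0 : 0 ≤ c := by positivity
  have hsq : Real.sqrt (2*π) ^ 2 = 2*π := Real.sq_sqrt (by positivity)
  have h2 : Real.sqrt 2 ^ 2 = 2 := Real.sq_sqrt (by norm_num)
  have hE : Real.exp 1 < 2.7182818286 := Real.exp_one_lt_d9
  have hE0 : 0 < Real.exp 1 := Real.exp_pos 1
  have hpi : 3.141592 < π := Real.pi_gt_d6
  have hcsq : c^2 < 4 := by
    have h6 : Real.sqrt (2*π)^6 = (2*π)^3 := by
      rw [show (6:ℕ) = 2*3 from rfl, pow_mul, hsq]
    have hceq : c^2 = 2 * Real.exp 1 ^ 6 / (2*π)^3 := by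
      rw [hc]
      field_simp
      have hpi2 : Real.sqrt π ^ 2 = π := Real.sq_sqrt Real.pi_pos.le
      have he36 : Real.exp 3 * Real.exp 3 = Real.exp 6 := by
        rw [← Real.exp_add]; norm_num
      rw [h6, h2]
      ring
    have hb1 : Real.exp 1^6 < (2.7182818286:ℝ)^6 :=
      pow_lt_pow_left₀ hE hE0.le (by norm_num)
    have hb2 : (3.141592:ℝ)^3 < π^3 := pow_lt_pow_left₀ hpi (by norm_num) (by norm_num)
    rw [hceq, div_lt_iff₀ (by positivity)]
    nlinarith [hb1, hb2]
  nlinarith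

/-- via Stirling bounds,
`C(2l,l)·C(2n−2l,n−l)·n^n ≤ √2·(e/√(2π))³·C(2n,n)·C(n,l)·l^l·(n−l)^{n−l}`,
and in particular the left-hand side is `< 2·C(2n,n)·C(n,l)·l^l·(n−l)^{n−l}`. -/
theorem central_binomial_ratio_bound (n l : ℕ) (hl : 0 < l) (hln : l < n) :
    ((2 * l).choose l : ℝ) * ((2 * n - 2 * l).choose (n - l) : ℝ) * (n : ℝ) ^ n ≤
        Real.sqrt 2 * (Real.exp 1 / Real.sqrt (2 * Real.pi)) ^ 3 *
          ((2 * n).choose n : ℝ) * (n.choose l : ℝ) * (l : ℝ) ^ l *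
          ((n : ℝ) - (l : ℝ)) ^ (n - l) ∧
      ((2 * l).choose l : ℝ) * ((2 * n - 2 * l).choose (n - l) : ℝ) * (n : ℝ) ^ n <
        2 * ((2 * n).choose n : ℝ) * (n.choose l : ℝ) * (l : ℝ) ^ l *
          ((n : ℝ) - (l : ℝ)) ^ (n - l) := by
  obtain ⟨k, rfl⟩ : ∃ k, n = l + k := ⟨n - l, by omega⟩
  have hk : 0 < k := by omega
  have part1 : ((2 * l).choose l : ℝ) * ((2 * (l+k) - 2 * l).choose ((l+k) - l) : ℝ)
      * ((l+k : ℕ) : ℝ) ^ (l+k) ≤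
      Real.sqrt 2 * (Real.exp 1 / Real.sqrt (2 * Real.pi)) ^ 3 *
        ((2 * (l+k)).choose (l+k) : ℝ) * ((l+k).choose l : ℝ) * (l : ℝ) ^ l *
        (((l+k : ℕ) : ℝ) - (l : ℝ)) ^ ((l+k) - l) := by
    have e1 : 2 * (l+k) - 2 * l = 2 * k := by omega
    have e2 : l + k - l = k := by omega
    rw [e1, e2]
    have ecast : ((l+k : ℕ) : ℝ) - (l : ℝ) = (k : ℝ) := by push_cast; ring
    rw [ecast]
    rw [Nat.cast_choose ℝ (show l ≤ 2*l by omega),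
      Nat.cast_choose ℝ (show k ≤ 2*k by omega),
      Nat.cast_choose ℝ (show l+k ≤ 2*(l+k) by omega),
      Nat.cast_choose ℝ (show l ≤ l+k by omega)]
    have e3 : 2*l - l = l := by omega
    have e4 : 2*k - k = k := by omega
    have e5 : 2*(l+k) - (l+k) = l+k := by omega
    have e6 : l+k - l = k := by omega
    rw [e3, e4, e5, e6]
    have hkey := key_fact_ineq' l k hl hk
    have fl : ((l).factorial : ℝ) ≠ 0 := by positivity
    have fk : ((k).factorial : ℝ) ≠ 0 := by positivity
    have flk : (((l+k)).factorial : ℝ) ≠ 0 := by positivity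
    have hD : (0:ℝ) < ((l).factorial : ℝ) * ((l).factorial : ℝ) * ((k).factorial : ℝ) * ((k).factorial : ℝ) * (((l+k)).factorial : ℝ) := by
      positivity
    have eL : ((2*l).factorial : ℝ) / (((l).factorial:ℝ) * ((l).factorial:ℝ)) * (((2*k).factorial : ℝ) / (((k).factorial:ℝ) * ((k).factorial:ℝ)))
        * ((l+k : ℕ) : ℝ) ^ (l+k) =
        (((2*l).factorial : ℝ) * ((2*k).factorial : ℝ) * (((l+k)).factorial : ℝ) * ((l:ℝ)+(k:ℝ))^(l+k)) /
          (((l).factorial : ℝ) * ((l).factorial : ℝ) * ((k).factorial : ℝ) * ((k).factorial : ℝ) * (((l+k)).factorial : ℝ)) := by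
      push_cast
      field_simp
    have eR : Real.sqrt 2 * (Real.exp 1 / Real.sqrt (2 * Real.pi)) ^ 3 *
        (((2*(l+k)).factorial : ℝ) / ((((l+k)).factorial:ℝ) * (((l+k)).factorial:ℝ))) *
        ((((l+k)).factorial : ℝ) / (((l).factorial:ℝ) * ((k).factorial:ℝ))) * (l : ℝ) ^ l * (k : ℝ) ^ k =
        (Real.sqrt 2 * (Real.exp 1 / Real.sqrt (2*Real.pi))^3 *
          ((2*(l+k)).factorial : ℝ) * ((l).factorial : ℝ) * ((k).factorial : ℝ) * (l:ℝ)^l * (k:ℝ)^k) /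
          (((l).factorial : ℝ) * ((l).factorial : ℝ) * ((k).factorial : ℝ) * ((k).factorial : ℝ) * (((l+k)).factorial : ℝ)) := by
      field_simp
    rw [eL, eR]
    exact div_le_div_of_nonneg_right hkey hD.le |>.trans_eq rfl
  refine ⟨part1, lt_of_le_of_lt part1 ?_⟩
  have hX : (0:ℝ) < ((2 * (l+k)).choose (l+k) : ℝ) * ((l+k).choose l : ℝ) * (l : ℝ) ^ l *
      (((l+k : ℕ) : ℝ) - (l : ℝ)) ^ ((l+k) - l) := by
    have c1 : 0 < ((2 * (l+k)).choose (l+k) : ℝ) := by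
      exact_mod_cast Nat.choose_pos (by omega)
    have c2 : 0 < ((l+k).choose l : ℝ) := by
      exact_mod_cast Nat.choose_pos (by omega)
    have c3 : (0:ℝ) < (l : ℝ) ^ l := by positivity
    have c4 : (0:ℝ) < (((l+k : ℕ) : ℝ) - (l : ℝ)) ^ ((l+k) - l) := by
      have : ((l+k : ℕ) : ℝ) - (l : ℝ) = (k : ℝ) := by push_cast; ring
      rw [this]; positivity
    positivity
  calc Real.sqrt 2 * (Real.exp 1 / Real.sqrt (2 * Real.pi)) ^ 3 *
        ((2 * (l+k)).choose (l+k) : ℝ) * ((l+k).choose l : ℝ) * (l : ℝ) ^ l *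
        (((l+k : ℕ) : ℝ) - (l : ℝ)) ^ ((l+k) - l)
      = (Real.sqrt 2 * (Real.exp 1 / Real.sqrt (2 * Real.pi)) ^ 3) *
        (((2 * (l+k)).choose (l+k) : ℝ) * ((l+k).choose l : ℝ) * (l : ℝ) ^ l *
        (((l+k : ℕ) : ℝ) - (l : ℝ)) ^ ((l+k) - l)) := by ring
    _ < 2 * (((2 * (l+k)).choose (l+k) : ℝ) * ((l+k).choose l : ℝ) * (l : ℝ) ^ l *
        (((l+k : ℕ) : ℝ) - (l : ℝ)) ^ ((l+k) - l)) :=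
        mul_lt_mul_of_pos_right const_lt_two' hX
    _ = 2 * ((2 * (l+k)).choose (l+k) : ℝ) * ((l+k).choose l : ℝ) * (l : ℝ) ^ l *
        (((l+k : ℕ) : ℝ) - (l : ℝ)) ^ ((l+k) - l) := by ring
end
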